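/- arXiv:2507.15552 — 3 statements merged into one kernel-verified Lean document; each statement's English description precedes it below -/
import Mathlib

section
/- For every real number B > 1, the Hausdorff dimension of F(B) = {x ∈ I_even : a_{2n}(x) ≥ B^{2n} for infinitely many n} is at most s_B. -/
open Filter Topology MeasureTheory

/-- The Gauss map `T(x) = 1/x mod 1`. -/
noncomputable def gaussMap (x : ℝ) : ℝ := Int.fract (1 / x)

/-- The `n`-th continued fraction partial quotient of `x`:
`a_n(x) = ⌊1 / T^{n-1}(x)⌋` for `n ≥ 1`. -/
noncomputable def cfa (n : ℕ) (x : ℝ) : ℤ := ⌊1 / (gaussMap^[n - 1] x)⌋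

/-- The set of irrational `x ∈ [0,1)` whose odd-order partial quotients all equal 1. -/
def Ieven : Set ℝ :=
  {x | x ∈ Set.Ico (0 : ℝ) 1 ∧ Irrational x ∧ ∀ k : ℕ, cfa (2 * k + 1) x = 1}

/-- Given `[a_2, a_4, …, a_{2n}]`, the denominator `q_{2n}` of
`[0; 1, a_2, 1, a_4, …, 1, a_{2n}]` (with `q_0 = q_1 = 1`,
`q_{2j} = a_{2j} q_{2j-1} + q_{2j-2}`, `q_{2j+1} = q_{2j} + q_{2j-1}`). -/
def qEven (l : List ℕ) : ℕ :=
  (l.foldl (fun p a => (p.2 + p.1, a * (p.2 + p.1) + p.2)) ((0 : ℕ), (1 : ℕ))).2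

/-- `f_{n,B}(ρ) = Σ_{a_2,…,a_{2n} ∈ 𝒜} (B^{2n} q_{2n}²)^{−ρ}`. -/
noncomputable def fnB (A : Set ℕ) (B : ℝ) (n : ℕ) (ρ : ℝ) : ENNReal :=
  ∑' v : Fin n → A,
    ENNReal.ofReal ((B ^ (2 * n) * (qEven (List.ofFn fun i => (v i : ℕ)) : ℝ) ^ 2) ^ (-ρ))

/-- `s_{n,B}(𝒜) = inf {ρ ≥ 0 : f_{n,B}(ρ) ≤ 1}`. -/
noncomputable def snB (A : Set ℕ) (B : ℝ) (n : ℕ) : ℝ :=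
  sInf {ρ : ℝ | 0 ≤ ρ ∧ fnB A B n ρ ≤ 1}

/-- `q_n(x)`: denominator of the `n`-th convergent of `x`. -/
noncomputable def qden (x : ℝ) : ℕ → ℤ
  | 0 => 1
  | 1 => cfa 1 x
  | (n + 2) => cfa (n + 2) x * qden x (n + 1) + qden x n

/-- `p_n(x)`: numerator of the `n`-th convergent of `x ∈ [0,1)`. -/
noncomputable def pnum (x : ℝ) : ℕ → ℤ
  | 0 => 0
  | 1 => 1
  | (n + 2) => cfa (n + 2) x * pnum x (n + 1) + pnum x n


namespace CFProof

/-- Step appending an even quotient `a` followed by an odd quotient `1` to the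
convergent data `((p_{2k}, p_{2k+1}), (q_{2k}, q_{2k+1}))`. -/
def cstep (s : (ℤ × ℤ) × (ℤ × ℤ)) (a : ℕ) : (ℤ × ℤ) × (ℤ × ℤ) :=
  (((a : ℤ) * s.1.2 + s.1.1, (a : ℤ) * s.1.2 + s.1.1 + s.1.2),
   ((a : ℤ) * s.2.2 + s.2.1, (a : ℤ) * s.2.2 + s.2.1 + s.2.2))

def cpair (l : List ℕ) : (ℤ × ℤ) × (ℤ × ℤ) := l.foldl cstep ((0, 1), (1, 1))

def qstep (s : ℕ × ℕ) (a : ℕ) : ℕ × ℕ := (s.2 + s.1, a * (s.2 + s.1) + s.2)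

lemma qEven_eq_fold (l : List ℕ) : qEven l = (l.foldl qstep (0, 1)).2 := rfl

lemma fold_rel : ∀ (l : List ℕ) (c : (ℤ × ℤ) × (ℤ × ℤ)) (s : ℕ × ℕ),
    c.2.1 = (s.2 : ℤ) → c.2.2 = ((s.1 : ℤ) + s.2) →
    (l.foldl cstep c).2.1 = ((l.foldl qstep s).2 : ℤ) ∧
    (l.foldl cstep c).2.2 = (((l.foldl qstep s).1 : ℤ) + (l.foldl qstep s).2) := by
  intro l
  induction l with
  | nil => intro c s h1 h2; exact ⟨h1, h2⟩
  | cons a l ih =>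
    intro c s h1 h2
    refine ih _ (qstep s a) ?_ ?_
    · simp only [cstep, qstep, h1, h2]
      push_cast; ring
    · simp only [cstep, qstep, h1, h2]
      push_cast; ring

lemma cpair_q1 (l : List ℕ) : (cpair l).2.1 = (qEven l : ℤ) :=
  (fold_rel l ((0, 1), (1, 1)) (0, 1) (by norm_num) (by norm_num)).1

lemma cpair_q2 (l : List ℕ) :
    (cpair l).2.2 = (((l.foldl qstep (0, 1)).1 : ℤ) + ((qEven l : ℤ))) := by
  have h := (fold_rel l ((0, 1), (1, 1)) (0, 1) (by norm_num) (by norm_num)).2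
  rw [qEven_eq_fold]; exact h

lemma qEven_le_cpair (l : List ℕ) : (qEven l : ℤ) ≤ (cpair l).2.2 := by
  rw [cpair_q2]
  have : (0:ℤ) ≤ ((l.foldl qstep (0, 1)).1 : ℤ) := by positivity
  linarith

lemma fold_q_mono : ∀ (l : List ℕ) (s : ℕ × ℕ), s.2 ≤ (l.foldl qstep s).2 := by
  intro l
  induction l with
  | nil => intro s; exact le_rfl
  | cons a l ih =>
    intro s
    calc s.2 ≤ (qstep s a).2 := Nat.le_add_left _ _
    _ ≤ _ := ih (qstep s a)

lemma one_le_qEven (l : List ℕ) : 1 ≤ qEven l := fold_q_mono l (0, 1)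

lemma prod_le_fold_q : ∀ (l : List ℕ) (s : ℕ × ℕ),
    s.2 * (l.map (· + 1)).prod ≤ (l.foldl qstep s).2 := by
  intro l
  induction l with
  | nil => intro s; simp
  | cons a l ih =>
    intro s
    calc s.2 * ((a + 1) * (l.map (· + 1)).prod)
        = ((a + 1) * s.2) * (l.map (· + 1)).prod := by ring
      _ ≤ (qstep s a).2 * (l.map (· + 1)).prod := by
          apply Nat.mul_le_mul_right
          simp only [qstep]
          calc (a + 1) * s.2 = a * s.2 + s.2 := by ring
            _ ≤ a * (s.2 + s.1) + s.2 := by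
                have : a * s.2 ≤ a * (s.2 + s.1) := Nat.mul_le_mul_left _ (Nat.le_add_right _ _)
                omega
      _ ≤ _ := by
          have := ih (qstep s a)
          simpa using this

lemma prod_le_qEven (l : List ℕ) : (l.map (· + 1)).prod ≤ qEven l := by
  have := prod_le_fold_q l (0, 1)
  simpa [qEven_eq_fold] using this


lemma gauss_step {y : ℝ} (hy : y ∈ Set.Ioo (0:ℝ) 1) (hi : Irrational y) :
    gaussMap y ∈ Set.Ioo (0:ℝ) 1 ∧ Irrational (gaussMap y) := by
  have hy0 : y ≠ 0 := ne_of_gt hy.1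
  have h1 : Irrational (1 / y) := by
    rw [one_div]
    exact hi.inv
  have hfr : Irrational (Int.fract (1 / y)) := by
    unfold Int.fract
    exact Irrational.sub_intCast h1 _
  have hne : Int.fract (1 / y) ≠ 0 := by
    intro h
    rw [h] at hfr
    exact (Rat.not_irrational 0) (by simpa using hfr)
  refine ⟨⟨lt_of_le_of_ne (Int.fract_nonneg _) (Ne.symm hne), Int.fract_lt_one _⟩, hfr⟩

lemma iter_mem {x : ℝ} (hx : x ∈ Set.Ioo (0:ℝ) 1) (hi : Irrational x) (m : ℕ) :
    gaussMap^[m] x ∈ Set.Ioo (0:ℝ) 1 ∧ Irrational (gaussMap^[m] x) := by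
  induction m with
  | zero => exact ⟨hx, hi⟩
  | succ m ih =>
    rw [Function.iterate_succ_apply']
    exact gauss_step ih.1 ih.2

lemma cfa_succ (x : ℝ) (m : ℕ) : cfa (m + 1) x = ⌊1 / gaussMap^[m] x⌋ := rfl

section Main
variable {x : ℝ} (hx : x ∈ Set.Ioo (0:ℝ) 1) (hi : Irrational x)
include hx hi

lemma one_le_cfa (m : ℕ) : 1 ≤ cfa (m + 1) x := by
  have h := iter_mem hx hi m
  rw [cfa_succ, Int.le_floor]
  push_cast
  rw [le_div_iff₀ h.1.1]
  nlinarith [h.1.2]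

lemma cfa_add_iter (m : ℕ) :
    (cfa (m + 1) x : ℝ) + gaussMap^[m + 1] x = 1 / gaussMap^[m] x := by
  rw [Function.iterate_succ_apply', cfa_succ]
  show (⌊1 / gaussMap^[m] x⌋ : ℝ) + Int.fract (1 / gaussMap^[m] x) = 1 / gaussMap^[m] x
  exact Int.floor_add_fract _

lemma key_id : ∀ n : ℕ,
    x * ((qden x (n + 1) : ℝ) + (qden x n : ℝ) * gaussMap^[n + 1] x)
      = (pnum x (n + 1) : ℝ) + (pnum x n : ℝ) * gaussMap^[n + 1] x := by
  intro n
  induction n with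
  | zero =>
    have h := cfa_add_iter hx hi 0
    simp only [Function.iterate_zero_apply] at h
    have hx0 : x ≠ 0 := ne_of_gt hx.1
    simp only [qden, pnum]
    push_cast
    rw [show ((cfa 1 x : ℝ) + 1 * gaussMap^[0+1] x) = (cfa 1 x : ℝ) + gaussMap^[1] x by ring, h]
    field_simp
    ring
  | succ n ih =>
    show x * ((qden x (n + 2) : ℝ) + (qden x (n + 1) : ℝ) * gaussMap^[n + 2] x)
        = (pnum x (n + 2) : ℝ) + (pnum x (n + 1) : ℝ) * gaussMap^[n + 2] x
    set t2 := gaussMap^[n + 2] x with ht2def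
    have hit : gaussMap^[n + 2] x ∈ Set.Ioo (0:ℝ) 1 ∧ Irrational (gaussMap^[n + 2] x) :=
      iter_mem hx hi (n + 2)
    have hstep' : (cfa (n + 2) x : ℝ) + t2 = 1 / gaussMap^[n + 1] x := cfa_add_iter hx hi (n + 1)
    have hd : (0:ℝ) < (cfa (n + 2) x : ℝ) + t2 := by
      have h1 := one_le_cfa hx hi (n + 1)
      have h2 : (1:ℝ) ≤ (cfa (n + 2) x : ℝ) := by exact_mod_cast h1
      have h3 : 0 < t2 := hit.1.1
      linarith
    have hd0 : ((cfa (n + 2) x : ℝ) + t2) ≠ 0 := ne_of_gt hd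
    have ht1 : gaussMap^[n + 1] x = 1 / ((cfa (n + 2) x : ℝ) + t2) := by
      rw [hstep', one_div_one_div]
    rw [ht1] at ih
    have hq : (qden x (n + 2) : ℝ) = (cfa (n + 2) x : ℝ) * (qden x (n + 1) : ℝ) + (qden x n : ℝ) := by
      rw [show qden x (n+2) = cfa (n+2) x * qden x (n+1) + qden x n from rfl]; push_cast; ring
    have hp : (pnum x (n + 2) : ℝ) = (cfa (n + 2) x : ℝ) * (pnum x (n + 1) : ℝ) + (pnum x n : ℝ) := by
      rw [show pnum x (n+2) = cfa (n+2) x * pnum x (n+1) + pnum x n from rfl]; push_cast; ring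
    field_simp at ih
    rw [hq, hp]
    ring_nf
    ring_nf at ih
    linear_combination ih

omit hx hi in
lemma det_id (x : ℝ) : ∀ n : ℕ,
    pnum x (n + 1) * qden x n - pnum x n * qden x (n + 1) = (-1) ^ n := by
  intro n
  induction n with
  | zero => simp [pnum, qden]
  | succ n ih =>
    show pnum x (n + 2) * qden x (n + 1) - pnum x (n + 1) * qden x (n + 2) = (-1) ^ (n + 1)
    rw [show pnum x (n+2) = cfa (n+2) x * pnum x (n+1) + pnum x n from rfl,
        show qden x (n+2) = cfa (n+2) x * qden x (n+1) + qden x n from rfl]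
    have : (-1:ℤ) ^ (n + 1) = -((-1) ^ n) := by ring
    rw [this, ← ih]
    ring

lemma qden_pos : ∀ n : ℕ, 1 ≤ qden x n ∧ qden x n ≤ qden x (n + 1) := by
  intro n
  induction n with
  | zero =>
    refine ⟨le_refl _, ?_⟩
    show (1:ℤ) ≤ cfa 1 x
    exact one_le_cfa hx hi 0
  | succ n ih =>
    refine ⟨ih.2.trans' ih.1, ?_⟩
    show qden x (n + 1) ≤ cfa (n + 2) x * qden x (n + 1) + qden x n
    have h1 := one_le_cfa hx hi (n + 1)
    nlinarith [ih.1, ih.2]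

lemma dist_le (n : ℕ) :
    |x - (pnum x (n + 1) : ℝ) / (qden x (n + 1) : ℝ)|
      ≤ gaussMap^[n + 1] x / ((qden x (n + 1) : ℝ)) ^ 2 := by
  have hid := key_id hx hi n
  have hdet := det_id x n
  have hq1 : (1:ℝ) ≤ (qden x (n + 1) : ℝ) := by exact_mod_cast (qden_pos hx hi (n+1)).1
  have hq0 : (1:ℝ) ≤ (qden x n : ℝ) := by exact_mod_cast (qden_pos hx hi n).1
  have hqpos : (0:ℝ) < (qden x (n + 1) : ℝ) := by linarith
  have ht := iter_mem hx hi (n + 1)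
  have ht0 : (0:ℝ) ≤ gaussMap^[n + 1] x := le_of_lt ht.1.1
  set t := gaussMap^[n + 1] x with htdef
  set p1 : ℝ := (pnum x (n + 1) : ℝ)
  set p0 : ℝ := (pnum x n : ℝ)
  set q1 : ℝ := (qden x (n + 1) : ℝ)
  set q0 : ℝ := (qden x n : ℝ)
  have hD : (0:ℝ) < q1 + q0 * t := by nlinarith
  have hD0 : q1 + q0 * t ≠ 0 := ne_of_gt hD
  have hq10 : q1 ≠ 0 := ne_of_gt hqpos
  have hcast : (p1 * q0 - p0 * q1 : ℝ) = (-1:ℝ) ^ n := by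
    have := hdet
    simp only [p0, p1, q0, q1]
    exact_mod_cast this
  have hdet' : (p0 * q1 - p1 * q0 : ℝ) = (-1:ℝ) ^ (n + 1) := by
    have h2 : (-1:ℝ) ^ (n+1) = -((-1:ℝ)^n) := by ring
    rw [h2, ← hcast]; ring
  have hxeq : x = (p1 + p0 * t) / (q1 + q0 * t) := by
    rw [eq_div_iff hD0]; exact hid
  have heq : x - p1 / q1 = (t * ((-1:ℝ) ^ (n + 1))) / ((q1 + q0 * t) * q1) := by
    rw [hxeq, div_sub_div _ _ hD0 hq10, ← hdet']
    congr 1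
    ring
  rw [heq, abs_div, abs_mul]
  have h1 : |(-1:ℝ) ^ (n + 1)| = 1 := by
    rw [abs_pow, abs_neg, abs_one, one_pow]
  rw [h1, mul_one, abs_of_nonneg ht0, abs_of_pos (by positivity : (0:ℝ) < (q1 + q0 * t) * q1)]
  have hc : (0:ℝ) ≤ q0 * t * q1 := by positivity
  have hle : q1 ^ 2 ≤ (q1 + q0 * t) * q1 := by nlinarith
  exact div_le_div_of_nonneg_left ht0 (by positivity) hle

lemma iter_le_inv_cfa (m : ℕ) :
    gaussMap^[m] x ≤ 1 / (cfa (m + 1) x : ℝ) := by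
  have ht := iter_mem hx hi m
  have ht0 : (0:ℝ) < gaussMap^[m] x := ht.1.1
  have hfl : (cfa (m + 1) x : ℝ) ≤ 1 / gaussMap^[m] x := by
    rw [cfa_succ]
    exact Int.floor_le _
  have ha : (0:ℝ) < (cfa (m + 1) x : ℝ) := by
    have := one_le_cfa hx hi m
    have : (1:ℝ) ≤ (cfa (m + 1) x : ℝ) := by exact_mod_cast this
    linarith
  rw [le_div_iff₀ ha]
  calc gaussMap^[m] x * (cfa (m + 1) x : ℝ) ≤ gaussMap^[m] x * (1 / gaussMap^[m] x) :=
        mul_le_mul_of_nonneg_left hfl (le_of_lt ht0)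
    _ = 1 := by field_simp

/-- Centre of the covering interval indexed by the list of even partial quotients. -/
noncomputable def cent (l : List ℕ) : ℝ := ((cpair l).1.2 : ℝ) / ((cpair l).2.2 : ℝ)

/-- Radius of the covering interval. -/
noncomputable def crad (B : ℝ) (l : List ℕ) : ℝ :=
  1 / (B ^ (2 * (l.length + 1)) * ((cpair l).2.2 : ℝ) ^ 2)

omit hx hi in
lemma one_le_cpair_q (l : List ℕ) : (1:ℤ) ≤ (cpair l).2.2 := by
  have h1 := qEven_le_cpair l
  have h2 := one_le_qEven l
  have : (1:ℤ) ≤ (qEven l : ℤ) := by exact_mod_cast h2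
  linarith

variable (hodd : ∀ k : ℕ, cfa (2 * k + 1) x = 1)
include hodd

lemma link : ∀ k : ℕ,
    cpair (List.ofFn fun j : Fin k => (cfa (2 * (j : ℕ) + 2) x).toNat)
      = ((pnum x (2 * k), pnum x (2 * k + 1)), (qden x (2 * k), qden x (2 * k + 1))) := by
  intro k
  induction k with
  | zero =>
    have h0 : cfa 1 x = 1 := by
      have := hodd 0
      simpa using this
    simp [cpair, pnum, qden, h0, List.ofFn_zero]
  | succ k ih =>
    have hc : (1:ℤ) ≤ cfa (2 * k + 2) x := one_le_cfa hx hi (2 * k + 1)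
    have htn : (((cfa (2 * k + 2) x).toNat : ℤ)) = cfa (2 * k + 2) x :=
      Int.toNat_of_nonneg (by linarith)
    have hofn : (List.ofFn fun j : Fin (k+1) => (cfa (2 * (j : ℕ) + 2) x).toNat)
        = (List.ofFn fun j : Fin k => (cfa (2 * (j : ℕ) + 2) x).toNat).concat
            ((cfa (2 * k + 2) x).toNat) := by
      rw [List.ofFn_succ']
      congr 1
    rw [hofn, List.concat_eq_append]
    unfold cpair
    rw [List.foldl_concat]
    rw [show List.foldl cstep ((0,1),(1,1)) (List.ofFn fun j : Fin k => (cfa (2*(j:ℕ)+2) x).toNat) = cpair (List.ofFn fun j : Fin k => (cfa (2*(j:ℕ)+2) x).toNat) from rfl]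
    rw [ih]
    have h1 : cfa (2 * k + 3) x = 1 := by
      have := hodd (k + 1)
      rw [show 2 * (k + 1) + 1 = 2 * k + 3 by ring] at this
      exact this
    have hp2 : pnum x (2 * k + 2) = cfa (2 * k + 2) x * pnum x (2 * k + 1) + pnum x (2 * k) := rfl
    have hp3 : pnum x (2 * k + 3) = cfa (2 * k + 3) x * pnum x (2 * k + 2) + pnum x (2 * k + 1) := rfl
    have hq2 : qden x (2 * k + 2) = cfa (2 * k + 2) x * qden x (2 * k + 1) + qden x (2 * k) := rfl
    have hq3 : qden x (2 * k + 3) = cfa (2 * k + 3) x * qden x (2 * k + 2) + qden x (2 * k + 1) := rfl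
    show cstep ((pnum x (2 * k), pnum x (2 * k + 1)), (qden x (2 * k), qden x (2 * k + 1)))
          ((cfa (2 * k + 2) x).toNat)
        = ((pnum x (2 * k + 2), pnum x (2 * k + 3)), (qden x (2 * k + 2), qden x (2 * k + 3)))
    rw [hp2, hp3, hq2, hq3, h1]
    simp only [cstep, htn, one_mul]
    rw [hp2, hq2]

lemma mem_cover {B : ℝ} (hB : 1 < B) (k : ℕ)
    (hcfa : (B : ℝ) ^ (2 * k + 2) ≤ (cfa (2 * k + 2) x : ℝ)) :
    |x - cent (List.ofFn fun j : Fin k => (cfa (2 * (j : ℕ) + 2) x).toNat)|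
      ≤ crad B (List.ofFn fun j : Fin k => (cfa (2 * (j : ℕ) + 2) x).toNat) := by
  have hlink := link hx hi hodd k
  set l := List.ofFn fun j : Fin k => (cfa (2 * (j : ℕ) + 2) x).toNat with hl
  have hlen : l.length = k := by rw [hl]; exact List.length_ofFn
  have hcent : cent l = (pnum x (2 * k + 1) : ℝ) / (qden x (2 * k + 1) : ℝ) := by
    unfold cent; rw [hlink]
  have hq : (cpair l).2.2 = qden x (2 * k + 1) := by rw [hlink]
  have hdist := dist_le hx hi (2 * k)
  have htle := iter_le_inv_cfa hx hi (2 * k + 1)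
  have hBpos : (0:ℝ) < B ^ (2 * k + 2) := by positivity
  have h2 : (1:ℝ) / (cfa (2 * k + 2) x : ℝ) ≤ 1 / B ^ (2 * k + 2) :=
    one_div_le_one_div_of_le hBpos hcfa
  have hq1 : (1:ℝ) ≤ (qden x (2 * k + 1) : ℝ) := by
    exact_mod_cast (qden_pos hx hi (2 * k + 1)).1
  have hcr : crad B l = (1 / B ^ (2 * k + 2)) / ((qden x (2 * k + 1) : ℝ)) ^ 2 := by
    unfold crad
    rw [hq, hlen, show 2 * (k + 1) = 2 * k + 2 by ring, div_div]
  rw [hcent, hcr]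
  calc |x - (pnum x (2 * k + 1) : ℝ) / (qden x (2 * k + 1) : ℝ)|
      ≤ gaussMap^[2 * k + 1] x / ((qden x (2 * k + 1) : ℝ)) ^ 2 := hdist
    _ ≤ (1 / B ^ (2 * k + 2)) / ((qden x (2 * k + 1) : ℝ)) ^ 2 := by
        gcongr
        exact htle.trans h2

end Main

lemma one_le_base {B : ℝ} (hB : 1 ≤ B) (n : ℕ) (l : List ℕ) :
    (1:ℝ) ≤ B ^ (2 * n) * ((qEven l : ℝ)) ^ 2 := by
  have h1 : (1:ℝ) ≤ B ^ (2 * n) := one_le_pow₀ hB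
  have h2 : (1:ℝ) ≤ (qEven l : ℝ) := by exact_mod_cast one_le_qEven l
  nlinarith

lemma fnB_anti (A : Set ℕ) {B : ℝ} (hB : 1 ≤ B) (n : ℕ) {ρ₁ ρ₂ : ℝ} (h : ρ₁ ≤ ρ₂) :
    fnB A B n ρ₂ ≤ fnB A B n ρ₁ := by
  unfold fnB
  apply ENNReal.tsum_le_tsum
  intro v
  apply ENNReal.ofReal_le_ofReal
  exact Real.rpow_le_rpow_of_exponent_le (one_le_base hB n _) (by linarith)

lemma tsum_pi_prod (g : {m : ℕ | 1 ≤ m} → ENNReal) : ∀ k : ℕ,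
    (∑' v : Fin k → {m : ℕ | 1 ≤ m}, ∏ i, g (v i)) = (∑' a, g a) ^ k := by
  intro k
  induction k with
  | zero =>
    rw [pow_zero]
    rw [tsum_eq_single (fun i => i.elim0)]
    · simp
    · intro b hb
      exact absurd (funext fun i => i.elim0) (Ne.symm hb)
  | succ k ih =>
    rw [← Equiv.tsum_eq (Fin.consEquiv (fun _ : Fin (k+1) => ({m : ℕ | 1 ≤ m} : Set ℕ)))]
    have : ∀ p : {m : ℕ | 1 ≤ m} × (Fin k → {m : ℕ | 1 ≤ m}),
        (∏ i, g ((Fin.consEquiv (fun _ : Fin (k+1) => ({m : ℕ | 1 ≤ m} : Set ℕ))) p i))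
          = g p.1 * ∏ i, g (p.2 i) := by
      intro p
      rw [Fin.prod_univ_succ]
      simp [Fin.consEquiv]
    rw [tsum_congr this]
    rw [show (∑' (b : {m : ℕ | 1 ≤ m} × (Fin k → {m : ℕ | 1 ≤ m})), g b.1 * ∏ i, g (b.2 i))
        = ∑' (a : {m : ℕ | 1 ≤ m}), ∑' (u : Fin k → {m : ℕ | 1 ≤ m}), g a * ∏ i, g (u i)
      from ENNReal.tsum_prod (f := fun (a : {m : ℕ | 1 ≤ m}) (u : Fin k → {m : ℕ | 1 ≤ m}) => g a * ∏ i, g (u i))]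
    simp_rw [ENNReal.tsum_mul_left]
    rw [ih, ENNReal.tsum_mul_right]
    ring

noncomputable def gfun : {m : ℕ | 1 ≤ m} → ENNReal :=
  fun a => ENNReal.ofReal ((1 / (((a : ℕ) : ℝ) + 1)) ^ 2)

noncomputable def hfun : ℕ → ENNReal :=
  fun m => ENNReal.ofReal (1 / (m : ℝ) - 1 / ((m : ℝ) + 1))

lemma hfun_partial : ∀ n : ℕ, (∑ m ∈ Finset.range (n + 1), hfun m)
    ≤ ENNReal.ofReal (1 - 1 / ((n : ℝ) + 1)) := by
  intro n
  induction n with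
  | zero => simp [hfun, Finset.sum_range_one]
  | succ n ih =>
    rw [Finset.sum_range_succ]
    have h1 : (0:ℝ) ≤ 1 - 1 / ((n : ℝ) + 1) := by
      have : 1 / ((n : ℝ) + 1) ≤ 1 := by
        rw [div_le_one (by positivity)]
        linarith [Nat.cast_nonneg (α := ℝ) n]
      linarith
    have h2 : (0:ℝ) ≤ 1 / ((n : ℝ) + 1) - 1 / ((n : ℝ) + 1 + 1) := by
      have : 1 / ((n : ℝ) + 1 + 1) ≤ 1 / ((n : ℝ) + 1) := by
        apply one_div_le_one_div_of_le (by positivity)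
        linarith
      linarith
    have hh : hfun (n + 1) = ENNReal.ofReal (1 / ((n : ℝ) + 1) - 1 / ((n : ℝ) + 1 + 1)) := by
      unfold hfun
      push_cast
      ring_nf
    calc (∑ m ∈ Finset.range (n + 1), hfun m) + hfun (n + 1)
        ≤ ENNReal.ofReal (1 - 1 / ((n : ℝ) + 1))
            + ENNReal.ofReal (1 / ((n : ℝ) + 1) - 1 / ((n : ℝ) + 1 + 1)) := by
          exact add_le_add ih (le_of_eq hh)
      _ ≤ ENNReal.ofReal (1 - 1 / ((((n : ℕ) + 1 : ℕ) : ℝ) + 1)) := by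
          rw [← ENNReal.ofReal_add h1 h2]
          apply ENNReal.ofReal_le_ofReal
          push_cast
          ring_nf
          exact le_refl _

lemma hfun_tsum_le_one : (∑' m : ℕ, hfun m) ≤ 1 := by
  rw [ENNReal.tsum_eq_iSup_sum]
  apply iSup_le
  intro s
  obtain ⟨n, hn⟩ := s.exists_nat_subset_range
  calc ∑ m ∈ s, hfun m ≤ ∑ m ∈ Finset.range (n + 1), hfun m := by
        apply Finset.sum_le_sum_of_subset
        exact hn.trans (Finset.range_subset_range.mpr (by omega))
    _ ≤ ENNReal.ofReal (1 - 1 / ((n : ℝ) + 1)) := hfun_partial n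
    _ ≤ 1 := by
        rw [← ENNReal.ofReal_one]
        apply ENNReal.ofReal_le_ofReal
        have : 0 ≤ 1 / ((n : ℝ) + 1) := by positivity
        linarith

lemma gfun_tsum_le_one : (∑' a : {m : ℕ | 1 ≤ m}, gfun a) ≤ 1 := by
  have hterm : ∀ a : {m : ℕ | 1 ≤ m}, gfun a ≤ hfun (a : ℕ) := by
    rintro ⟨m, hm⟩
    have hm1 : (1:ℝ) ≤ (m : ℝ) := by exact_mod_cast hm
    unfold gfun hfun
    apply ENNReal.ofReal_le_ofReal
    have he : 1 / (m:ℝ) - 1 / ((m:ℝ) + 1) = 1 / ((m:ℝ) * ((m:ℝ) + 1)) := by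
      field_simp
      ring
    rw [he]
    have h1 : (1 / ((m:ℝ) + 1)) ^ 2 = 1 / ((m:ℝ) + 1) ^ 2 := by
      rw [div_pow, one_pow]
    rw [h1]
    apply one_div_le_one_div_of_le (by positivity)
    nlinarith
  calc (∑' a : {m : ℕ | 1 ≤ m}, gfun a) ≤ ∑' a : {m : ℕ | 1 ≤ m}, hfun (a : ℕ) :=
        ENNReal.tsum_le_tsum hterm
    _ = ∑' m : ℕ, Set.indicator {m : ℕ | 1 ≤ m} hfun m := tsum_subtype _ _
    _ ≤ ∑' m : ℕ, hfun m := ENNReal.tsum_le_tsum (fun m => Set.indicator_le_self _ _ m)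
    _ ≤ 1 := hfun_tsum_le_one

lemma fnB_one_le {B : ℝ} (hB : 1 ≤ B) (n : ℕ) : fnB {m : ℕ | 1 ≤ m} B n 1 ≤ 1 := by
  unfold fnB
  have hterm : ∀ v : Fin n → {m : ℕ | 1 ≤ m},
      ENNReal.ofReal ((B ^ (2 * n) * ((qEven (List.ofFn fun i => ((v i : ℕ)))) : ℝ) ^ 2) ^ (-(1:ℝ)))
        ≤ ∏ i, gfun (v i) := by
    intro v
    set qE := qEven (List.ofFn fun i => ((v i : ℕ))) with hqE
    have hprod : (∏ i : Fin n, ((v i : ℕ) + 1)) ≤ qE := by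
      have h := prod_le_qEven (List.ofFn fun i => ((v i : ℕ)))
      rw [List.map_ofFn, List.prod_ofFn] at h
      exact h
    have hprodR : (∏ i : Fin n, (((v i : ℕ) : ℝ) + 1)) ≤ (qE : ℝ) := by
      exact_mod_cast hprod
    have hci : ∀ i : Fin n, (0:ℝ) < ((v i : ℕ) : ℝ) + 1 := fun i => by positivity
    have hprodpos : (0:ℝ) < ∏ i : Fin n, (((v i : ℕ) : ℝ) + 1) :=
      Finset.prod_pos (fun i _ => hci i)
    have hbase : (0:ℝ) < B ^ (2 * n) * (qE : ℝ) ^ 2 := by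
      have : (1:ℝ) ≤ B ^ (2 * n) * (qE : ℝ) ^ 2 := one_le_base hB n _
      linarith
    rw [Real.rpow_neg_one]
    have key : (B ^ (2 * n) * (qE : ℝ) ^ 2)⁻¹ ≤ ∏ i : Fin n, (1 / (((v i : ℕ) : ℝ) + 1)) ^ 2 := by
      have h2 : (∏ i : Fin n, (1 / (((v i : ℕ) : ℝ) + 1)) ^ 2)
          = ((∏ i : Fin n, (((v i : ℕ) : ℝ) + 1)) ^ 2)⁻¹ := by
        rw [Finset.prod_pow]
        simp only [one_div]
        rw [Finset.prod_inv_distrib, inv_pow]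
      rw [h2]
      apply inv_anti₀ (by positivity)
      have hq1 : (1:ℝ) ≤ B ^ (2 * n) := one_le_pow₀ hB
      nlinarith
    calc ENNReal.ofReal ((B ^ (2 * n) * (qE : ℝ) ^ 2)⁻¹)
        ≤ ENNReal.ofReal (∏ i : Fin n, (1 / (((v i : ℕ) : ℝ) + 1)) ^ 2) :=
          ENNReal.ofReal_le_ofReal key
      _ = ∏ i, gfun (v i) := by
          rw [ENNReal.ofReal_prod_of_nonneg (fun i _ => by positivity)]
          rfl
  calc _ ≤ ∑' v : Fin n → {m : ℕ | 1 ≤ m}, ∏ i, gfun (v i) := ENNReal.tsum_le_tsum hterm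
    _ = (∑' a, gfun a) ^ n := tsum_pi_prod gfun n
    _ ≤ 1 := pow_le_one' gfun_tsum_le_one n

lemma snB_nonneg (A : Set ℕ) (B : ℝ) (n : ℕ) : 0 ≤ snB A B n :=
  Real.sInf_nonneg (fun _ hx => hx.1)

lemma fnB_le_one_of_snB_lt {B : ℝ} (hB : 1 < B) {n : ℕ} {ρ : ℝ}
    (h : snB {m : ℕ | 1 ≤ m} B n < ρ) : fnB {m : ℕ | 1 ≤ m} B n ρ ≤ 1 := by
  have hmem : (1:ℝ) ∈ {ρ : ℝ | 0 ≤ ρ ∧ fnB {m : ℕ | 1 ≤ m} B n ρ ≤ 1} :=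
    ⟨zero_le_one, fnB_one_le hB.le n⟩
  have hbdd : BddBelow {ρ : ℝ | 0 ≤ ρ ∧ fnB {m : ℕ | 1 ≤ m} B n ρ ≤ 1} :=
    ⟨0, fun _ hy => hy.1⟩
  unfold snB at h
  obtain ⟨ρ'', hmem'', hlt⟩ := (csInf_lt_iff hbdd ⟨1, hmem⟩).1 h
  exact le_trans (fnB_anti _ hB.le n hlt.le) hmem''.2

def eShift (m : ℕ) : ℕ ≃ {k : ℕ // m ≤ k} where
  toFun j := ⟨j + m, Nat.le_add_left m j⟩
  invFun k := (k : ℕ) - m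
  left_inv j := by simp
  right_inv k := Subtype.ext (Nat.sub_add_cancel k.2)

def eTuple (k : ℕ) : (Fin k → {m : ℕ | 1 ≤ m}) ≃ {v : Fin k → ℕ // ∀ i, 1 ≤ v i} where
  toFun u := ⟨fun i => (u i : ℕ), fun i => (u i).2⟩
  invFun w i := ⟨w.1 i, w.2 i⟩
  left_inv u := rfl
  right_inv w := rfl

lemma real_chain {B : ℝ} (hB : 1 < B) {ρ ρ' δ : ℝ} (h0' : 0 ≤ ρ') (hδ : 0 < δ)
    (hsum : ρ = ρ' + δ) (hρ1 : ρ ≤ 1) (k : ℕ) {qE Q : ℝ} (hqE : 1 ≤ qE) (hQ : qE ≤ Q) :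
    (2 * (1 / (B ^ (2 * (k + 1)) * Q ^ 2))) ^ ρ
      ≤ 2 * (B ^ (-(2 * δ))) ^ (k + 1) * (B ^ (2 * k) * qE ^ 2) ^ (-ρ') := by
  have hB0 : (0:ℝ) < B := by linarith
  have hρ0 : (0:ℝ) ≤ ρ := by linarith
  have hQ1 : (1:ℝ) ≤ Q := le_trans hqE hQ
  have hBp : ∀ m : ℕ, (1:ℝ) ≤ B ^ m := fun m => one_le_pow₀ hB.le
  have hX1 : (0:ℝ) < B ^ (2 * (k + 1)) * Q ^ 2 := by nlinarith [hBp (2 * (k + 1))]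
  have hX2 : (0:ℝ) < B ^ (2 * (k + 1)) * qE ^ 2 := by nlinarith [hBp (2 * (k + 1))]
  have hX3 : (0:ℝ) < B ^ (2 * k) * qE ^ 2 := by nlinarith [hBp (2 * k)]
  have hX21 : B ^ (2 * (k + 1)) * qE ^ 2 ≤ B ^ (2 * (k + 1)) * Q ^ 2 := by
    have hq2 : qE ^ 2 ≤ Q ^ 2 := by nlinarith
    exact mul_le_mul_of_nonneg_left hq2 (by positivity)
  have hX32 : B ^ (2 * k) * qE ^ 2 ≤ B ^ (2 * (k + 1)) * qE ^ 2 := by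
    have : B ^ (2 * k) ≤ B ^ (2 * (k + 1)) := pow_le_pow_right₀ hB.le (by omega)
    nlinarith
  have hA : (2 * (1 / (B ^ (2 * (k + 1)) * Q ^ 2))) ^ ρ
      = 2 ^ ρ * (1 / (B ^ (2 * (k + 1)) * Q ^ 2)) ^ ρ :=
    Real.mul_rpow (by norm_num) (by positivity)
  have hBle : (2:ℝ) ^ ρ ≤ 2 := by
    calc (2:ℝ) ^ ρ ≤ 2 ^ (1:ℝ) := Real.rpow_le_rpow_of_exponent_le one_le_two hρ1
      _ = 2 := Real.rpow_one 2
  have hC : (1 / (B ^ (2 * (k + 1)) * Q ^ 2)) ^ ρ = (B ^ (2 * (k + 1)) * Q ^ 2) ^ (-ρ) := by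
    rw [one_div, Real.inv_rpow hX1.le, ← Real.rpow_neg hX1.le]
  have hD : (B ^ (2 * (k + 1)) * Q ^ 2) ^ (-ρ) ≤ (B ^ (2 * (k + 1)) * qE ^ 2) ^ (-ρ) := by
    rw [Real.rpow_neg hX1.le, Real.rpow_neg hX2.le]
    exact inv_anti₀ (Real.rpow_pos_of_pos hX2 ρ) (Real.rpow_le_rpow hX2.le hX21 hρ0)
  have hE : (B ^ (2 * (k + 1)) * qE ^ 2) ^ (-ρ)
      = (B ^ (2 * (k + 1)) * qE ^ 2) ^ (-δ) * (B ^ (2 * (k + 1)) * qE ^ 2) ^ (-ρ') := by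
    rw [← Real.rpow_add hX2]
    congr 1
    linarith
  have hF : (B ^ (2 * (k + 1)) * qE ^ 2) ^ (-δ) ≤ (B ^ (2 * (k + 1))) ^ (-δ) := by
    have hle : B ^ (2 * (k + 1)) ≤ B ^ (2 * (k + 1)) * qE ^ 2 := by
      have h1 : (1:ℝ) ≤ qE ^ 2 := by nlinarith
      nlinarith [hBp (2 * (k + 1))]
    have hp : (0:ℝ) < B ^ (2 * (k + 1)) := by positivity
    rw [Real.rpow_neg hp.le, Real.rpow_neg hX2.le]
    exact inv_anti₀ (Real.rpow_pos_of_pos hp δ) (Real.rpow_le_rpow hp.le hle hδ.le)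
  have hG : (B ^ (2 * (k + 1)) : ℝ) ^ (-δ) = (B ^ (-(2 * δ))) ^ (k + 1) := by
    have hexp : ((2 * (k + 1) : ℕ) : ℝ) * (-δ) = (-(2 * δ)) * ((k + 1 : ℕ) : ℝ) := by
      push_cast; ring
    rw [← Real.rpow_natCast B (2 * (k + 1)), ← Real.rpow_mul hB0.le, hexp,
      Real.rpow_mul hB0.le, Real.rpow_natCast]
  have hH : (B ^ (2 * (k + 1)) * qE ^ 2) ^ (-ρ') ≤ (B ^ (2 * k) * qE ^ 2) ^ (-ρ') := by
    rw [Real.rpow_neg hX3.le, Real.rpow_neg hX2.le]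
    exact inv_anti₀ (Real.rpow_pos_of_pos hX3 ρ') (Real.rpow_le_rpow hX3.le hX32 h0')
  have hnn1 : (0:ℝ) ≤ (B ^ (2 * (k + 1)) * Q ^ 2) ^ (-ρ) := Real.rpow_nonneg hX1.le _
  have hnn2 : (0:ℝ) ≤ (B ^ (2 * (k + 1)) * qE ^ 2) ^ (-ρ') := Real.rpow_nonneg hX2.le _
  have hnn3 : (0:ℝ) ≤ (B ^ (2 * k) * qE ^ 2) ^ (-ρ') := Real.rpow_nonneg hX3.le _
  have hnn4 : (0:ℝ) ≤ (B ^ (2 * (k + 1))) ^ (-δ) := Real.rpow_nonneg (by positivity) _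
  calc (2 * (1 / (B ^ (2 * (k + 1)) * Q ^ 2))) ^ ρ
      = 2 ^ ρ * (B ^ (2 * (k + 1)) * Q ^ 2) ^ (-ρ) := by rw [hA, hC]
    _ ≤ 2 * (B ^ (2 * (k + 1)) * Q ^ 2) ^ (-ρ) := mul_le_mul_of_nonneg_right hBle hnn1
    _ ≤ 2 * (B ^ (2 * (k + 1)) * qE ^ 2) ^ (-ρ) := by
        apply mul_le_mul_of_nonneg_left hD (by norm_num)
    _ = 2 * ((B ^ (2 * (k + 1)) * qE ^ 2) ^ (-δ) * (B ^ (2 * (k + 1)) * qE ^ 2) ^ (-ρ')) := by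
        rw [hE]
    _ ≤ 2 * ((B ^ (2 * (k + 1))) ^ (-δ) * (B ^ (2 * (k + 1)) * qE ^ 2) ^ (-ρ')) := by
        apply mul_le_mul_of_nonneg_left (mul_le_mul_of_nonneg_right hF hnn2) (by norm_num)
    _ ≤ 2 * ((B ^ (2 * (k + 1))) ^ (-δ) * (B ^ (2 * k) * qE ^ 2) ^ (-ρ')) := by
        apply mul_le_mul_of_nonneg_left (mul_le_mul_of_nonneg_left hH hnn4) (by norm_num)
    _ = 2 * (B ^ (-(2 * δ))) ^ (k + 1) * (B ^ (2 * k) * qE ^ 2) ^ (-ρ') := by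
        rw [hG]; ring

open scoped Classical in
noncomputable def tset (B : ℝ) (N : ℕ) (i : Σ k : ℕ, Fin k → ℕ) : Set ℝ :=
  if N ≤ i.1 + 1 ∧ ∀ j, 1 ≤ i.2 j then
    Set.Icc (cent (List.ofFn i.2) - crad B (List.ofFn i.2))
            (cent (List.ofFn i.2) + crad B (List.ofFn i.2))
  else ∅

lemma crad_pos {B : ℝ} (hB : 1 < B) (l : List ℕ) : 0 < crad B l := by
  unfold crad
  have h1 : (1:ℝ) ≤ ((cpair l).2.2 : ℝ) := by exact_mod_cast one_le_cpair_q l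
  have hB0 : (0:ℝ) < B := by linarith
  positivity

lemma crad_le {B : ℝ} (hB : 1 < B) {N : ℕ} {l : List ℕ} (h : N ≤ l.length + 1) :
    crad B l ≤ 1 / B ^ (2 * N) := by
  unfold crad
  have h1 : (1:ℝ) ≤ ((cpair l).2.2 : ℝ) := by exact_mod_cast one_le_cpair_q l
  have hB0 : (0:ℝ) < B := by linarith
  have h2 : B ^ (2 * N) ≤ B ^ (2 * (l.length + 1)) := pow_le_pow_right₀ hB.le (by omega)
  have h3 : B ^ (2 * (l.length + 1)) ≤ B ^ (2 * (l.length + 1)) * ((cpair l).2.2 : ℝ) ^ 2 := by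
    nlinarith [pow_pos hB0 (2 * (l.length + 1)), sq_nonneg (((cpair l).2.2 : ℝ) - 1)]
  apply one_div_le_one_div_of_le (by positivity)
  linarith

lemma diam_tset {B : ℝ} (hB : 1 < B) (N : ℕ) (i : Σ k : ℕ, Fin k → ℕ) :
    EMetric.diam (tset B N i) ≤ ENNReal.ofReal (2 * (1 / B ^ (2 * N))) := by
  unfold tset
  split_ifs with h
  · rw [EMetric.diam, Real.ediam_Icc]
    apply ENNReal.ofReal_le_ofReal
    have hcr : crad B (List.ofFn i.2) ≤ 1 / B ^ (2 * N) := by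
      apply crad_le hB
      rw [List.length_ofFn]
      exact h.1
    linarith
  · simp [EMetric.diam]

lemma cover_subset {B : ℝ} (hB : 1 < B) (N : ℕ) :
    {x : ℝ | x ∈ Ieven ∧ ∃ᶠ n in atTop, (B ^ (2 * n) : ℝ) ≤ (cfa (2 * n) x : ℝ)}
      ⊆ ⋃ i, tset B N i := by
  rintro x ⟨⟨hxIco, hxirr, hodd⟩, hfreq⟩
  have hx01 : x ∈ Set.Ioo (0:ℝ) 1 := ⟨lt_of_le_of_ne hxIco.1 (Ne.symm hxirr.ne_zero), hxIco.2⟩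
  obtain ⟨n, hnge, hcfa⟩ := (frequently_atTop.1 hfreq) (max N 1)
  have hn1 : 1 ≤ n := le_trans (le_max_right N 1) hnge
  have hnN : N ≤ n := le_trans (le_max_left N 1) hnge
  set k := n - 1 with hk
  have hkn : n = k + 1 := by omega
  refine Set.mem_iUnion.2 ⟨⟨k, fun j => (cfa (2 * (j : ℕ) + 2) x).toNat⟩, ?_⟩
  unfold tset
  rw [if_pos]
  · set l := List.ofFn fun j : Fin k => (cfa (2 * (j : ℕ) + 2) x).toNat with hl
    have hcfa' : (B : ℝ) ^ (2 * k + 2) ≤ (cfa (2 * k + 2) x : ℝ) := by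
      rw [hkn] at hcfa
      rw [show 2 * (k + 1) = 2 * k + 2 by ring] at hcfa
      exact hcfa
    have hmc := mem_cover hx01 hxirr hodd hB k hcfa'
    rw [Set.mem_Icc]
    have h := abs_le.1 hmc
    constructor <;> linarith [h.1, h.2]
  · show N ≤ k + 1 ∧ ∀ j : Fin k, 1 ≤ (cfa (2 * (j : ℕ) + 2) x).toNat
    refine ⟨by omega, fun j => ?_⟩
    have h1 : 1 ≤ cfa (2 * (j : ℕ) + 2) x := one_le_cfa hx01 hxirr (2 * (j : ℕ) + 1)
    omega

lemma inner_sum_le {B : ℝ} (hB : 1 < B) {ρ' ρ : ℝ} (h0' : 0 ≤ ρ') (hlt : ρ' < ρ) (hρ1 : ρ ≤ 1)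
    {N k : ℕ} (hNk : N ≤ k + 1) (hfnB : fnB {m : ℕ | 1 ≤ m} B k ρ' ≤ 1) :
    (∑' v : Fin k → ℕ, EMetric.diam (tset B N ⟨k, v⟩) ^ ρ)
      ≤ ENNReal.ofReal (2 * (B ^ (-(2 * (ρ - ρ')))) ^ (k + 1)) := by
  have hB0 : (0:ℝ) < B := by linarith
  have hcR0 : (0:ℝ) < B ^ (-(2 * (ρ - ρ'))) := Real.rpow_pos_of_pos hB0 _
  have hcon : (0:ℝ) ≤ 2 * (B ^ (-(2 * (ρ - ρ')))) ^ (k + 1) := by positivity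
  have hterm : ∀ v : Fin k → ℕ,
      EMetric.diam (tset B N ⟨k, v⟩) ^ ρ
        ≤ Set.indicator {v : Fin k → ℕ | ∀ j, 1 ≤ v j}
            (fun v => ENNReal.ofReal (2 * (B ^ (-(2 * (ρ - ρ')))) ^ (k + 1))
              * ENNReal.ofReal ((B ^ (2 * k) * ((qEven (List.ofFn v) : ℝ)) ^ 2) ^ (-ρ'))) v := by
    intro v
    by_cases hv : ∀ j, 1 ≤ v j
    · rw [Set.indicator_of_mem (show v ∈ {v : Fin k → ℕ | ∀ j, 1 ≤ v j} from hv)]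
      have htpos : tset B N ⟨k, v⟩ = Set.Icc (cent (List.ofFn v) - crad B (List.ofFn v))
          (cent (List.ofFn v) + crad B (List.ofFn v)) := by
        unfold tset
        rw [if_pos ⟨hNk, hv⟩]
      rw [htpos, EMetric.diam, Real.ediam_Icc]
      have he : cent (List.ofFn v) + crad B (List.ofFn v)
          - (cent (List.ofFn v) - crad B (List.ofFn v)) = 2 * crad B (List.ofFn v) := by ring
      rw [he]
      have hcp : 0 < 2 * crad B (List.ofFn v) := by
        have := crad_pos hB (List.ofFn v)
        linarith
      rw [ENNReal.ofReal_rpow_of_pos hcp]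
      have hqE : (1:ℝ) ≤ ((qEven (List.ofFn v) : ℝ)) := by
        exact_mod_cast one_le_qEven (List.ofFn v)
      have hQ : ((qEven (List.ofFn v) : ℝ)) ≤ ((cpair (List.ofFn v)).2.2 : ℝ) := by
        exact_mod_cast qEven_le_cpair (List.ofFn v)
      have hcr : crad B (List.ofFn v)
          = 1 / (B ^ (2 * (k + 1)) * ((cpair (List.ofFn v)).2.2 : ℝ) ^ 2) := by
        unfold crad
        rw [List.length_ofFn]
      have hchain := real_chain hB h0' (by linarith : (0:ℝ) < ρ - ρ')
        (by ring : ρ = ρ' + (ρ - ρ')) hρ1 k hqE hQ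
      rw [← hcr] at hchain
      calc ENNReal.ofReal ((2 * crad B (List.ofFn v)) ^ ρ)
          ≤ ENNReal.ofReal (2 * (B ^ (-(2 * (ρ - ρ')))) ^ (k + 1)
              * (B ^ (2 * k) * ((qEven (List.ofFn v) : ℝ)) ^ 2) ^ (-ρ')) :=
            ENNReal.ofReal_le_ofReal hchain
        _ = _ := ENNReal.ofReal_mul hcon
    · have htneg : tset B N ⟨k, v⟩ = ∅ := by
        unfold tset
        rw [if_neg]
        rintro ⟨-, h2⟩
        exact hv h2
      rw [htneg, EMetric.diam, EMetric.diam_empty, ENNReal.zero_rpow_of_pos (by linarith : (0:ℝ) < ρ)]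
      exact zero_le
  calc (∑' v : Fin k → ℕ, EMetric.diam (tset B N ⟨k, v⟩) ^ ρ)
      ≤ ∑' v : Fin k → ℕ, Set.indicator {v : Fin k → ℕ | ∀ j, 1 ≤ v j}
          (fun v => ENNReal.ofReal (2 * (B ^ (-(2 * (ρ - ρ')))) ^ (k + 1))
            * ENNReal.ofReal ((B ^ (2 * k) * ((qEven (List.ofFn v) : ℝ)) ^ 2) ^ (-ρ'))) v :=
        ENNReal.tsum_le_tsum hterm
    _ = ∑' w : {v : Fin k → ℕ | ∀ j, 1 ≤ v j},
          ENNReal.ofReal (2 * (B ^ (-(2 * (ρ - ρ')))) ^ (k + 1))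
            * ENNReal.ofReal ((B ^ (2 * k) * ((qEven (List.ofFn (w : Fin k → ℕ)) : ℝ)) ^ 2) ^ (-ρ')) :=
        (tsum_subtype _ _).symm
    _ = ∑' u : Fin k → {m : ℕ | 1 ≤ m},
          ENNReal.ofReal (2 * (B ^ (-(2 * (ρ - ρ')))) ^ (k + 1))
            * ENNReal.ofReal ((B ^ (2 * k) * ((qEven (List.ofFn fun i => ((u i : ℕ))) : ℝ)) ^ 2) ^ (-ρ')) :=
        (Equiv.tsum_eq (eTuple k) _).symm
    _ = ENNReal.ofReal (2 * (B ^ (-(2 * (ρ - ρ')))) ^ (k + 1)) * fnB {m : ℕ | 1 ≤ m} B k ρ' := by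
        unfold fnB
        rw [ENNReal.tsum_mul_left]
    _ ≤ ENNReal.ofReal (2 * (B ^ (-(2 * (ρ - ρ')))) ^ (k + 1)) * 1 := mul_le_mul_right hfnB _
    _ = ENNReal.ofReal (2 * (B ^ (-(2 * (ρ - ρ')))) ^ (k + 1)) := mul_one _

lemma hseq_tsum_ne_top {c : ℝ} (hc0 : 0 ≤ c) (hc1 : c < 1) :
    (∑' k : ℕ, ENNReal.ofReal (2 * c ^ (k + 1))) ≠ ⊤ := by
  have heq : ∀ k : ℕ, ENNReal.ofReal (2 * c ^ (k + 1))
      = ENNReal.ofReal 2 * ENNReal.ofReal c * (ENNReal.ofReal c) ^ k := by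
    intro k
    rw [ENNReal.ofReal_mul (by norm_num), ENNReal.ofReal_pow hc0, pow_succ]
    ring
  rw [tsum_congr heq]
  rw [ENNReal.tsum_mul_left, ENNReal.tsum_geometric]
  apply ENNReal.mul_ne_top
  · exact ENNReal.mul_ne_top ENNReal.ofReal_ne_top ENNReal.ofReal_ne_top
  · rw [Ne, ENNReal.inv_eq_top]
    rw [tsub_eq_zero_iff_le]
    intro hle
    have := ENNReal.ofReal_lt_one.2 hc1
    exact absurd hle (not_le.2 this)

lemma GN_tendsto {c : ℝ} (hc0 : 0 ≤ c) (hc1 : c < 1) :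
    Tendsto (fun N : ℕ => ∑' k : ℕ, Set.indicator {k : ℕ | N ≤ k + 1}
      (fun k => ENNReal.ofReal (2 * c ^ (k + 1))) k) atTop (𝓝 0) := by
  have hGN : ∀ N : ℕ, (∑' k : ℕ, Set.indicator {k : ℕ | N ≤ k + 1}
      (fun k => ENNReal.ofReal (2 * c ^ (k + 1))) k)
      = ∑' j : ℕ, ENNReal.ofReal (2 * c ^ ((j + (N - 1)) + 1)) := by
    intro N
    have hset : {k : ℕ | N ≤ k + 1} = {k : ℕ | N - 1 ≤ k} := by
      ext k; simp only [Set.mem_setOf_eq]; omega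
    rw [hset, ← tsum_subtype]
    exact (Equiv.tsum_eq (eShift (N - 1)) (fun s : {k : ℕ // N - 1 ≤ k} =>
      ENNReal.ofReal (2 * c ^ ((s : ℕ) + 1)))).symm
  rw [funext hGN]
  have h1 := ENNReal.tendsto_sum_nat_add (fun k => ENNReal.ofReal (2 * c ^ (k + 1)))
    (hseq_tsum_ne_top hc0 hc1)
  exact h1.comp (tendsto_sub_atTop_nat 1)

lemma measure_zero {B : ℝ} (hB : 1 < B) {ρ' ρ : ℝ} (h0' : 0 ≤ ρ') (hlt : ρ' < ρ) (hρ1 : ρ ≤ 1)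
    (K₀ : ℕ) (hK : ∀ k, K₀ ≤ k → fnB {m : ℕ | 1 ≤ m} B k ρ' ≤ 1) :
    μH[ρ] {x : ℝ | x ∈ Ieven ∧ ∃ᶠ n in atTop, (B ^ (2 * n) : ℝ) ≤ (cfa (2 * n) x : ℝ)} = 0 := by
  have hB0 : (0:ℝ) < B := by linarith
  set cR : ℝ := B ^ (-(2 * (ρ - ρ'))) with hcR
  have hcR0 : 0 < cR := Real.rpow_pos_of_pos hB0 _
  have hcR1 : cR < 1 := Real.rpow_lt_one_of_one_lt_of_neg hB (by nlinarith)
  set S := {x : ℝ | x ∈ Ieven ∧ ∃ᶠ n in atTop, (B ^ (2 * n) : ℝ) ≤ (cfa (2 * n) x : ℝ)} with hS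
  -- the covering bound
  have hr : Tendsto (fun N : ℕ => ENNReal.ofReal (2 * (1 / B ^ (2 * N)))) atTop (𝓝 0) := by
    have t2 : Tendsto (fun N : ℕ => 2 * N) atTop atTop :=
      tendsto_atTop_mono (fun n : ℕ => by simp only [id]; omega) tendsto_id
    have t1 : Tendsto (fun m : ℕ => (1 / B) ^ m) atTop (𝓝 0) :=
      tendsto_pow_atTop_nhds_zero_of_lt_one (by positivity) (by rw [div_lt_one hB0]; linarith)
    have t3 : Tendsto (fun N : ℕ => (1 / B) ^ (2 * N)) atTop (𝓝 0) := t1.comp t2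
    have t4 : Tendsto (fun N : ℕ => 2 * (1 / B ^ (2 * N))) atTop (𝓝 0) := by
      have : ∀ N : ℕ, 2 * (1 / B ^ (2 * N)) = 2 * (1 / B) ^ (2 * N) := by
        intro N; rw [one_div_pow]
      rw [funext this]
      simpa using t3.const_mul (2:ℝ)
    have := ENNReal.tendsto_ofReal t4
    simpa using this
  have hμ : μH[ρ] S ≤ liminf (fun N : ℕ => ∑' i : Σ k : ℕ, Fin k → ℕ,
      EMetric.diam (tset B N i) ^ ρ) atTop := by
    exact MeasureTheory.Measure.hausdorffMeasure_le_liminf_tsum ρ S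
      (fun N : ℕ => ENNReal.ofReal (2 * (1 / B ^ (2 * N)))) hr (fun N => tset B N)
      (Eventually.of_forall (fun N => fun i => diam_tset hB N i))
      (Eventually.of_forall (fun N => cover_subset hB N))
  have hbound : ∀ᶠ N in atTop, (∑' i : Σ k : ℕ, Fin k → ℕ, EMetric.diam (tset B N i) ^ ρ)
      ≤ ∑' k : ℕ, Set.indicator {k : ℕ | N ≤ k + 1}
          (fun k => ENNReal.ofReal (2 * cR ^ (k + 1))) k := by
    rw [eventually_atTop]
    refine ⟨K₀ + 1, fun N hN => ?_⟩
    rw [ENNReal.tsum_sigma']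
    apply ENNReal.tsum_le_tsum
    intro k
    by_cases hNk : N ≤ k + 1
    · rw [Set.indicator_of_mem (show k ∈ {k : ℕ | N ≤ k + 1} from hNk)]
      exact inner_sum_le hB h0' hlt hρ1 hNk (hK k (by omega))
    · rw [Set.indicator_of_notMem (show k ∉ {k : ℕ | N ≤ k + 1} from hNk)]
      have hz : ∀ v : Fin k → ℕ, EMetric.diam (tset B N ⟨k, v⟩) ^ ρ = 0 := by
        intro v
        have htneg : tset B N ⟨k, v⟩ = ∅ := by
          unfold tset
          rw [if_neg]
          rintro ⟨h1, -⟩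
          exact hNk h1
        rw [htneg, EMetric.diam, EMetric.diam_empty, ENNReal.zero_rpow_of_pos (by linarith : (0:ℝ) < ρ)]
      rw [tsum_congr hz]
      simp
  have hGlim := GN_tendsto hcR0.le hcR1
  have h2 : liminf (fun N : ℕ => ∑' i : Σ k : ℕ, Fin k → ℕ,
      EMetric.diam (tset B N i) ^ ρ) atTop ≤ liminf (fun N : ℕ => ∑' k : ℕ,
      Set.indicator {k : ℕ | N ≤ k + 1} (fun k => ENNReal.ofReal (2 * cR ^ (k + 1))) k) atTop :=
    liminf_le_liminf hbound
  have h3 := hGlim.liminf_eq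
  refine le_antisymm ?_ zero_le
  calc μH[ρ] S ≤ _ := hμ
    _ ≤ _ := h2
    _ = 0 := h3

end CFProof

open CFProof in
/-- Proposition 5.1: for `B > 1`, `dim_H F(B) ≤ s_B`. -/
theorem dimH_FB_le_sB (B : ℝ) (hB : 1 < B) (sB : ℝ)
    (hsB : Tendsto (fun n => snB {m : ℕ | 1 ≤ m} B n) atTop (nhds sB)) :
    dimH {x | x ∈ Ieven ∧ ∃ᶠ n in atTop, (B ^ (2 * n) : ℝ) ≤ (cfa (2 * n) x : ℝ)} ≤
      ENNReal.ofReal sB := by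
  have hsB0 : 0 ≤ sB := ge_of_tendsto hsB (Eventually.of_forall (fun n => snB_nonneg _ _ n))
  by_cases h1 : 1 ≤ sB
  · calc dimH {x | x ∈ Ieven ∧ ∃ᶠ n in atTop, (B ^ (2 * n) : ℝ) ≤ (cfa (2 * n) x : ℝ)}
        ≤ dimH (Set.univ : Set ℝ) := dimH_mono (Set.subset_univ _)
      _ = 1 := Real.dimH_univ
      _ ≤ ENNReal.ofReal sB := by
          rw [← ENNReal.ofReal_one]
          exact ENNReal.ofReal_le_ofReal h1
  · push_neg at h1
    apply ENNReal.le_of_forall_pos_le_add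
    intro ε hε _
    have hεR : (0:ℝ) < (ε : ℝ) := by exact_mod_cast hε
    set ρ : ℝ := min (sB + (ε : ℝ)) 1 with hρdef
    have hρsB : sB < ρ := lt_min (by linarith) h1
    have hρ1 : ρ ≤ 1 := min_le_right _ _
    set ρ' : ℝ := (sB + ρ) / 2 with hρ'def
    have hsρ' : sB < ρ' := by rw [hρ'def]; linarith
    have hρ'ρ : ρ' < ρ := by rw [hρ'def]; linarith
    have h0' : 0 ≤ ρ' := by linarith
    have hev : ∀ᶠ n in atTop, snB {m : ℕ | 1 ≤ m} B n < ρ' := hsB.eventually_lt_const hsρ'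
    obtain ⟨K₀, hK₀⟩ := eventually_atTop.1 hev
    have hK : ∀ k, K₀ ≤ k → fnB {m : ℕ | 1 ≤ m} B k ρ' ≤ 1 := fun k hk =>
      fnB_le_one_of_snB_lt hB (hK₀ k hk)
    have hμ := measure_zero hB h0' hρ'ρ hρ1 K₀ hK
    have hρ0 : 0 ≤ ρ := le_trans hsB0 hρsB.le
    have hcoe : ((ρ.toNNReal : ℝ)) = ρ := Real.coe_toNNReal _ hρ0
    have hne : μH[(ρ.toNNReal : ℝ)]
        {x : ℝ | x ∈ Ieven ∧ ∃ᶠ n in atTop, (B ^ (2 * n) : ℝ) ≤ (cfa (2 * n) x : ℝ)} ≠ ⊤ := by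
      rw [hcoe, hμ]
      exact ENNReal.zero_ne_top
    have hdim := dimH_le_of_hausdorffMeasure_ne_top hne
    calc dimH {x | x ∈ Ieven ∧ ∃ᶠ n in atTop, (B ^ (2 * n) : ℝ) ≤ (cfa (2 * n) x : ℝ)}
        ≤ (ρ.toNNReal : ENNReal) := hdim
      _ = ENNReal.ofReal ρ := rfl
      _ ≤ ENNReal.ofReal (sB + (ε : ℝ)) := ENNReal.ofReal_le_ofReal (min_le_left _ _)
      _ = ENNReal.ofReal sB + ENNReal.ofReal (ε : ℝ) := ENNReal.ofReal_add hsB0 hεR.le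
      _ = ENNReal.ofReal sB + ε := by rw [ENNReal.ofReal_coe_nnreal]
end

section
/- Let b > 1 and c > 1 be real numbers and let x ∈ E(b,c) = {x ∈ I_even : a_{2n}(x) ≥ c^{b^{2n}} for infinitely many n}. Then for every real number d with 1 < d < b, the inequality q_{2n+2}(x) > max{ q_{2n}(x)^{d²}, c^{d^{2n+2}} } holds for infinitely many n. -/
open Filter Topology MeasureTheory

lemma gauss_step {y : ℝ} (hy : y ∈ Set.Ioo (0:ℝ) 1) (hirr : Irrational y) :
    gaussMap y ∈ Set.Ioo (0:ℝ) 1 ∧ Irrational (gaussMap y) := by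
  have hinv : Irrational (1 / y) := by
    rw [one_div]
    rintro ⟨q, hq⟩
    exact hirr ⟨q⁻¹, by push_cast; rw [hq, inv_inv]⟩
  have hfr : Irrational (gaussMap y) := by
    have h : gaussMap y = 1 / y - (⌊1 / y⌋ : ℤ) := rfl
    rw [h]
    exact hinv.sub_intCast _
  refine ⟨⟨?_, Int.fract_lt_one _⟩, hfr⟩
  rcases (Int.fract_nonneg (1/y)).lt_or_eq with h | h
  · exact h
  · exfalso
    exact hfr.ne_zero ((show gaussMap y = Int.fract (1/y) from rfl).trans h.symm)

lemma gauss_iter {x : ℝ} (hx : x ∈ Set.Ioo (0:ℝ) 1) (hirr : Irrational x) (n : ℕ) :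
    gaussMap^[n] x ∈ Set.Ioo (0:ℝ) 1 ∧ Irrational (gaussMap^[n] x) := by
  induction n with
  | zero => exact ⟨hx, hirr⟩
  | succ k ih =>
    rw [Function.iterate_succ_apply']
    exact gauss_step ih.1 ih.2

lemma cfa_ge_one {x : ℝ} (hx : x ∈ Set.Ioo (0:ℝ) 1) (hirr : Irrational x) (n : ℕ) :
    1 ≤ cfa n x := by
  obtain ⟨hmem, -⟩ := gauss_iter hx hirr (n-1)
  refine Int.le_floor.mpr ?_
  rw [Int.cast_one]
  exact one_le_one_div hmem.1 hmem.2.le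

lemma qden_ge_one {x : ℝ} (hx : x ∈ Set.Ioo (0:ℝ) 1) (hirr : Irrational x) (n : ℕ) :
    1 ≤ qden x n := by
  have h : ∀ m, 1 ≤ qden x m ∧ 1 ≤ qden x (m+1) := by
    intro m
    induction m with
    | zero => exact ⟨le_refl 1, cfa_ge_one hx hirr 1⟩
    | succ k ih =>
      refine ⟨ih.2, ?_⟩
      show 1 ≤ cfa (k+2) x * qden x (k+1) + qden x k
      nlinarith [cfa_ge_one hx hirr (k+2), ih.1, ih.2]
  exact (h n).1


/-- Lemma 6.1: if `x ∈ E(b,c)` then for any `1 < d < b`,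
`q_{2n+2}(x) > max {q_{2n}(x)^{d²}, c^{d^{2n+2}}}` for infinitely many `n`. -/
theorem qden_growth_of_mem_Ebc (b c : ℝ) (hb : 1 < b) (hc : 1 < c)
    (d : ℝ) (hd1 : 1 < d) (hdb : d < b) (x : ℝ)
    (hx : x ∈ Ieven ∧ ∃ᶠ n in atTop, c ^ (b ^ (2 * n)) ≤ (cfa (2 * n) x : ℝ)) :
    ∃ᶠ n in atTop,
      max ((qden x (2 * n) : ℝ) ^ (d ^ 2)) (c ^ ((d : ℝ) ^ (2 * n + 2))) <
        (qden x (2 * n + 2) : ℝ) := by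
  obtain ⟨⟨hxI, hxirr, hodd⟩, hfreq⟩ := hx
  have hx0 : x ∈ Set.Ioo (0:ℝ) 1 :=
    ⟨lt_of_le_of_ne hxI.1 (Ne.symm hxirr.ne_zero), hxI.2⟩
  have hq : ∀ n, 1 ≤ qden x n := qden_ge_one hx0 hxirr
  have hQ : ∀ n, (1:ℝ) ≤ (qden x n : ℝ) := fun n => by exact_mod_cast hq n
  have hd0 : (0:ℝ) < d := lt_trans one_pos hd1
  have hlogc : 0 < Real.log c := Real.log_pos hc
  rw [Filter.frequently_atTop]
  intro N
  set n₀ := N + 1 with hn₀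
  set K : ℝ := (qden x (2 * n₀) : ℝ) with hKdef
  have hK1 : (1:ℝ) ≤ K := hQ _
  -- choose large n
  have hbd : 1 < b / d := (one_lt_div hd0).mpr hdb
  have hten : Tendsto (fun n : ℕ => ((b/d)^2)^n * Real.log c) atTop atTop := by
    apply Tendsto.atTop_mul_const hlogc
    exact tendsto_pow_atTop_atTop_of_one_lt (one_lt_pow₀ hbd (by norm_num))
  have hev : ∀ᶠ n in atTop, Real.log K < ((b/d)^2)^n * Real.log c :=
    hten.eventually_gt_atTop _
  obtain ⟨n, hbig, hlog, hnge⟩ :=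
    (hfreq.and_eventually (hev.and (eventually_ge_atTop (n₀+1)))).exists
  by_contra hcon
  push_neg at hcon
  -- hcon : ∀ m ≥ N, Q(2m+2) ≤ max (Q(2m)^(d^2)) (c^(d^(2m+2)))
  -- induction claim
  have hclaim : ∀ m, n₀ ≤ m →
      (qden x (2*m) : ℝ) ≤ max (K ^ (d ^ (2*(m - n₀)))) (c ^ (d ^ (2*m))) := by
    intro m hm
    induction m, hm using Nat.le_induction with
    | base =>
      simp only [Nat.sub_self, mul_zero, pow_zero, Real.rpow_one]
      exact le_max_left _ _
    | succ m hm ih =>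
      have hcm := hcon m (by omega)
      have h2m2 : 2*(m+1) = 2*m + 2 := by ring
      rw [h2m2]
      have key : (qden x (2*m+2) : ℝ) ≤
          max ((qden x (2*m) : ℝ) ^ (d ^ 2)) (c ^ (d ^ (2*m+2))) := hcm
      have hstep : ((qden x (2*m) : ℝ)) ^ (d ^ 2) ≤
          max (K ^ (d ^ (2*(m+1-n₀)))) (c ^ (d ^ (2*m+2))) := by
        have hb1 : (0:ℝ) ≤ (qden x (2*m) : ℝ) := le_trans zero_le_one (hQ _)
        have := Real.rpow_le_rpow hb1 ih (le_of_lt (pow_pos hd0 2))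
        rcases le_total (K ^ (d ^ (2*(m - n₀)))) (c ^ (d ^ (2*m))) with hAB | hAB
        · rw [max_eq_right hAB] at this
          refine le_trans this (le_trans (le_of_eq ?_) (le_max_right _ _))
          rw [← Real.rpow_natCast d (2*m), ← Real.rpow_natCast d 2,
            ← Real.rpow_mul (le_of_lt (lt_trans one_pos hc)),
            ← Real.rpow_add hd0, ← Real.rpow_natCast d (2*m+2)]
          push_cast
          ring_nf
        · rw [max_eq_left hAB] at this
          refine le_trans this (le_trans (le_of_eq ?_) (le_max_left _ _))
          rw [← Real.rpow_natCast d (2*(m-n₀)), ← Real.rpow_natCast d 2,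
            ← Real.rpow_mul (le_trans zero_le_one hK1),
            ← Real.rpow_add hd0, ← Real.rpow_natCast d (2*(m+1-n₀))]
          congr 1
          have : m + 1 - n₀ = (m - n₀) + 1 := by omega
          rw [this]
          push_cast
          ring
      calc (qden x (2*m+2) : ℝ) ≤ _ := key
        _ ≤ max (max (K ^ (d ^ (2*(m+1-n₀)))) (c ^ (d ^ (2*m+2)))) (c ^ (d ^ (2*m+2))) :=
            max_le_max hstep (le_refl _)
        _ = max (K ^ (d ^ (2*(m+1-n₀)))) (c ^ (d ^ (2*m+2))) := by
            rw [max_assoc, max_self]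
  -- apply at n
  have hcl := hclaim n (by omega)
  -- q_{2n} ≥ a_{2n}
  have hn1 : 1 ≤ n := by omega
  have hqa : (cfa (2*n) x : ℝ) ≤ (qden x (2*n) : ℝ) := by
    obtain ⟨k, hk⟩ : ∃ k, 2*n = k + 2 := ⟨2*n - 2, by omega⟩
    rw [hk]
    have h1 : qden x (k+2) = cfa (k+2) x * qden x (k+1) + qden x k := rfl
    have := hq (k+1); have := hq k
    have hca := cfa_ge_one hx0 hxirr (k+2)
    have : cfa (k+2) x ≤ qden x (k+2) := by rw [h1]; nlinarith
    exact_mod_cast this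
  have hcb : c ^ (b ^ (2*n)) ≤ (qden x (2*n) : ℝ) := le_trans hbig hqa
  -- contradiction: max < c^(b^(2n))
  have hBn : c ^ (d ^ (2*n)) < c ^ (b ^ (2*n)) := by
    apply Real.rpow_lt_rpow_of_exponent_lt hc
    exact pow_lt_pow_left₀ hdb (le_of_lt hd0) (by omega)
  have hAn : K ^ (d ^ (2*(n - n₀))) < c ^ (b ^ (2*n)) := by
    have h1 : K ^ (d ^ (2*(n - n₀))) ≤ K ^ (d ^ (2*n)) :=
      Real.rpow_le_rpow_of_exponent_le hK1 (pow_le_pow_right₀ (le_of_lt hd1) (by omega))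
    refine lt_of_le_of_lt h1 ?_
    have hK0 : (0:ℝ) < K := lt_of_lt_of_le one_pos hK1
    rw [Real.rpow_def_of_pos hK0, Real.rpow_def_of_pos (lt_trans one_pos hc)]
    apply Real.exp_lt_exp.mpr
    have hE : b ^ (2*n) = ((b/d)^2)^n * d^(2*n) := by
      rw [← pow_mul, ← mul_pow]
      congr 1
      field_simp
    have hdn : (0:ℝ) < d ^ (2*n) := pow_pos hd0 _
    calc Real.log K * d ^ (2*n) < (((b/d)^2)^n * Real.log c) * d ^ (2*n) :=
          mul_lt_mul_of_pos_right hlog hdn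
      _ = Real.log c * b ^ (2*n) := by rw [hE]; ring
  have : c ^ (b ^ (2*n)) < c ^ (b ^ (2*n)) :=
    lt_of_le_of_lt hcb (lt_of_le_of_lt hcl (max_lt hAn hBn))
  exact lt_irrefl _ this
end

section
/- Let b > 1 and c > 1 be real numbers and let d satisfy 1 < d < b. Then for every positive integer m, each x ∈ E(b,c) = {x ∈ I_even : a_{2n}(x) ≥ c^{b^{2n}} for infinitely many n} satisfies at least one of the following: (i) there exists n with q_{2n}(x) ≥ m, q_{2n}(x) ≥ c^{d^{2n}/3}, and |x − p_{2n+1}(x)/q_{2n+1}(x)| ≤ q_{2n}(x)^{−(1+d²)}; (ii) there exists n with q_{2n}(x) ≥ m and |x − p_{2n+1}(x)/q_{2n+1}(x)| ≤ q_{2n}(x)^{−2(1+d²)}. Equivalently, for each m the family of balls B(p_{2n+1}(x)/q_{2n+1}(x), q_{2n}(x)^{−(1+d²)}) with q_{2n}(x) = q ≥ max{m, c^{d^{2n}/3}} together with the balls B(p_{2n+1}(x)/q_{2n+1}(x), q_{2n}(x)^{−2(1+d²)}) with q_{2n}(x) = q ≥ m covers E(b,c). -/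
open Filter Topology MeasureTheory

lemma qden_rec (x : ℝ) (n : ℕ) : qden x (n + 2) = cfa (n + 2) x * qden x (n + 1) + qden x n := rfl
lemma pnum_rec (x : ℝ) (n : ℕ) : pnum x (n + 2) = cfa (n + 2) x * pnum x (n + 1) + pnum x n := rfl
lemma cfa_succ (x : ℝ) (n : ℕ) : cfa (n + 1) x = ⌊1 / (gaussMap^[n] x)⌋ := rfl

lemma iterProp {x : ℝ} (hxI : Irrational x) (h0 : 0 < x) (h1 : x < 1) :
    ∀ n, Irrational (gaussMap^[n] x) ∧ 0 < gaussMap^[n] x ∧ gaussMap^[n] x < 1 := by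
  intro n
  induction n with
  | zero => exact ⟨hxI, h0, h1⟩
  | succ n ih =>
    obtain ⟨hI, hp, hl⟩ := ih
    rw [Function.iterate_succ_apply']
    have hinv : Irrational (1 / gaussMap^[n] x) := by
      rw [one_div]; exact hI.inv
    have hfr : Irrational (gaussMap (gaussMap^[n] x)) := by
      unfold gaussMap Int.fract
      exact hinv.sub_intCast _
    refine ⟨hfr, lt_of_le_of_ne ?_ (Ne.symm hfr.ne_zero), ?_⟩
    · exact Int.fract_nonneg _
    · exact Int.fract_lt_one _

lemma cfa_pos {x : ℝ} (hxI : Irrational x) (h0 : 0 < x) (h1 : x < 1) (n : ℕ) :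
    1 ≤ cfa (n + 1) x := by
  obtain ⟨hI, hp, hl⟩ := iterProp hxI h0 h1 n
  rw [cfa_succ]
  rw [Int.le_floor]
  push_cast
  exact one_le_one_div hp hl.le

lemma iter_eq {x : ℝ} (hxI : Irrational x) (h0 : 0 < x) (h1 : x < 1) (n : ℕ) :
    1 / gaussMap^[n] x = (cfa (n + 1) x : ℝ) + gaussMap^[n + 1] x := by
  rw [Function.iterate_succ_apply']
  show _ = _ + gaussMap (gaussMap^[n] x)
  rw [cfa_succ]
  unfold gaussMap Int.fract
  ring

section basic
variable {x : ℝ} (hxI : Irrational x) (h0 : 0 < x) (h1 : x < 1)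
include hxI h0 h1

lemma qden_pos_mono : ∀ n, 1 ≤ qden x n ∧ qden x n ≤ qden x (n + 1) := by
  intro n
  induction n with
  | zero => exact ⟨le_refl _, cfa_pos hxI h0 h1 0⟩
  | succ n ih =>
    obtain ⟨ih1, ih2⟩ := ih
    have ha := cfa_pos hxI h0 h1 (n + 1)
    have h2 : 1 ≤ qden x (n + 1) := le_trans ih1 ih2
    refine ⟨h2, ?_⟩
    rw [qden_rec]
    nlinarith

lemma qden_one_le (n : ℕ) : 1 ≤ qden x n := (qden_pos_mono hxI h0 h1 n).1

lemma qden_le_succ (n : ℕ) : qden x n ≤ qden x (n + 1) := (qden_pos_mono hxI h0 h1 n).2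

lemma qden_succ_lt (n : ℕ) : qden x n + 1 ≤ qden x (n + 2) := by
  have ha := cfa_pos hxI h0 h1 (n + 1)
  have h2 := qden_one_le hxI h0 h1 (n + 1)
  have h3 := qden_one_le hxI h0 h1 n
  rw [qden_rec]
  nlinarith

lemma qden_ge (k : ℕ) : (k : ℤ) + 1 ≤ qden x (2 * k) := by
  induction k with
  | zero => simp [qden]
  | succ k ih =>
    have := qden_succ_lt hxI h0 h1 (2 * k)
    have he : 2 * (k + 1) = 2 * k + 2 := by ring
    rw [he]
    push_cast
    omega

lemma conv_id : ∀ n, x * ((qden x (n + 1) : ℝ) + (qden x n : ℝ) * gaussMap^[n + 1] x)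
    = (pnum x (n + 1) : ℝ) + (pnum x n : ℝ) * gaussMap^[n + 1] x := by
  intro n
  induction n with
  | zero =>
    have h := iter_eq hxI h0 h1 0
    simp only [Function.iterate_zero_apply] at h
    have hx0 : x ≠ 0 := ne_of_gt h0
    show x * ((qden x 1 : ℝ) + (qden x 0 : ℝ) * gaussMap^[0 + 1] x)
      = (pnum x 1 : ℝ) + (pnum x 0 : ℝ) * gaussMap^[0 + 1] x
    have hq : qden x 1 = cfa 1 x := rfl
    have hp : pnum x 1 = (1 : ℤ) := rfl
    have hq0 : qden x 0 = (1 : ℤ) := rfl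
    have hp0 : pnum x 0 = (0 : ℤ) := rfl
    rw [hq, hp, hq0, hp0]
    push_cast
    have h' : x * ((cfa (0 + 1) x : ℝ) + gaussMap^[0 + 1] x) = 1 := by
      rw [← h]; exact mul_one_div_cancel hx0
    linear_combination h'
  | succ n ih =>
    have h := iter_eq hxI h0 h1 (n + 1)
    have ht : gaussMap^[n + 1] x ≠ 0 := ne_of_gt (iterProp hxI h0 h1 (n + 1)).2.1
    have h1' : gaussMap^[n + 1] x * ((cfa (n + 2) x : ℝ) + gaussMap^[n + 2] x) = 1 := by
      rw [show (n + 2 : ℕ) = (n + 1) + 1 from rfl, ← h]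
      exact mul_one_div_cancel ht
    rw [qden_rec, pnum_rec]
    push_cast
    set t := gaussMap^[n + 1] x
    set s := gaussMap^[n + 2] x
    set a := (cfa (n + 2) x : ℝ)
    linear_combination (a + s) * ih + ((pnum x n : ℝ) - x * (qden x n : ℝ)) * h1'

lemma det_id : ∀ n, pnum x n * qden x (n + 1) - pnum x (n + 1) * qden x n = (-1) ^ (n + 1) := by
  intro n
  induction n with
  | zero => simp [qden, pnum]
  | succ n ih =>
    rw [qden_rec, pnum_rec, pow_succ]
    linear_combination (-1 : ℤ) * ih

lemma err_bound (n : ℕ) :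
    |x - (pnum x (n + 1) : ℝ) / (qden x (n + 1) : ℝ)| ≤
      1 / ((qden x (n + 1) : ℝ) * (qden x (n + 2) : ℝ)) := by
  obtain ⟨htI, ht0, ht1⟩ := iterProp hxI h0 h1 (n + 1)
  have hid := conv_id hxI h0 h1 n
  have hdet := det_id hxI h0 h1 n
  have hq1 : (1 : ℝ) ≤ (qden x (n + 1) : ℝ) := by exact_mod_cast qden_one_le hxI h0 h1 (n + 1)
  have hq0 : (1 : ℝ) ≤ (qden x n : ℝ) := by exact_mod_cast qden_one_le hxI h0 h1 n
  have hq2 : (1 : ℝ) ≤ (qden x (n + 2) : ℝ) := by exact_mod_cast qden_one_le hxI h0 h1 (n + 2)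
  have hQ1pos : (0 : ℝ) < (qden x (n + 1) : ℝ) := lt_of_lt_of_le zero_lt_one hq1
  have hQ1ne : ((qden x (n + 1) : ℝ)) ≠ 0 := ne_of_gt hQ1pos
  have hfl : (cfa (n + 2) x : ℝ) ≤ 1 / gaussMap^[n + 1] x := by
    rw [cfa_succ x (n + 1)]; exact Int.floor_le _
  have hqrec : (qden x (n + 2) : ℝ)
      = (cfa (n + 2) x : ℝ) * (qden x (n + 1) : ℝ) + (qden x n : ℝ) := by
    exact_mod_cast congrArg (fun z : ℤ => (z : ℝ)) (qden_rec x n)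
  have hdetR : (pnum x n : ℝ) * (qden x (n + 1) : ℝ) - (pnum x (n + 1) : ℝ) * (qden x n : ℝ)
      = (-1 : ℝ) ^ (n + 1) := by exact_mod_cast hdet
  rw [hqrec]
  revert ht0 ht1 hid hfl
  generalize gaussMap^[n + 1] x = t
  intro ht0 ht1 hid hfl
  have ha : (cfa (n + 2) x : ℝ) * t ≤ 1 := by
    calc (cfa (n + 2) x : ℝ) * t ≤ (1 / t) * t := mul_le_mul_of_nonneg_right hfl ht0.le
      _ = 1 := one_div_mul_cancel ht0.ne'
  have hden : (0 : ℝ) < (qden x (n + 1) : ℝ) + (qden x n : ℝ) * t := by nlinarith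
  have hform : x - (pnum x (n + 1) : ℝ) / (qden x (n + 1) : ℝ)
      = (-1 : ℝ) ^ (n + 1) * t /
        (((qden x (n + 1) : ℝ) + (qden x n : ℝ) * t) * (qden x (n + 1) : ℝ)) := by
    rw [eq_div_iff (ne_of_gt (mul_pos hden hQ1pos)), ← hdetR]
    field_simp
    linear_combination ((qden x (n + 1) : ℝ)) * hid
  rw [hform, abs_div, abs_mul, abs_pow, abs_neg, abs_one, one_pow, one_mul,
    abs_of_pos ht0, abs_of_pos (mul_pos hden hQ1pos)]
  rw [div_le_div_iff₀ (mul_pos hden hQ1pos)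
    (mul_pos hQ1pos (by nlinarith : (0:ℝ) < (cfa (n + 2) x : ℝ) * (qden x (n + 1) : ℝ) + (qden x n : ℝ)))]
  nlinarith [mul_le_mul_of_nonneg_right (mul_le_mul_of_nonneg_right ha hQ1pos.le) hQ1pos.le,
    mul_le_mul_of_nonneg_right ha hQ1pos.le, ht0.le, hq0, hq1]
end basic

section derived
variable {x : ℝ} (hxI : Irrational x) (h0 : 0 < x) (h1 : x < 1)
  (hodd : ∀ k : ℕ, cfa (2 * k + 1) x = 1)
include hxI h0 h1

lemma cfa_le_qden (k : ℕ) : cfa (2 * (k + 1)) x ≤ qden x (2 * (k + 1)) := by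
  have h2 : 2 * (k + 1) = 2 * k + 2 := by ring
  rw [h2, qden_rec]
  have hA : 1 ≤ cfa (2 * k + 1 + 1) x := cfa_pos hxI h0 h1 (2 * k + 1)
  have hq1 := qden_one_le hxI h0 h1 (2 * k + 1)
  have hq0 := qden_one_le hxI h0 h1 (2 * k)
  have : cfa (2 * k + 1 + 1) x = cfa (2 * k + 2) x := by norm_num
  nlinarith [this ▸ hA]

include hodd

lemma qden_odd_le (k : ℕ) : qden x (2 * k + 1) ≤ 2 * qden x (2 * k) := by
  cases k with
  | zero =>
    have he : qden x 1 = cfa 1 x := rfl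
    have h1' : cfa 1 x = 1 := by have := hodd 0; norm_num at this; exact this
    have h0' : qden x 0 = 1 := rfl
    norm_num [he, h1', h0']
  | succ j =>
    have h2 : 2 * (j + 1) + 1 = (2 * j + 1) + 2 := by ring
    rw [h2, qden_rec]
    have hc : cfa (2 * j + 1 + 2) x = 1 := by
      have := hodd (j + 1)
      rw [show 2 * (j + 1) + 1 = 2 * j + 1 + 2 from by ring] at this
      exact this
    rw [hc]
    have hle := qden_le_succ hxI h0 h1 (2 * j + 1)
    have h3 : 2 * (j + 1) = 2 * j + 1 + 1 := by ring
    rw [h3]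
    omega

lemma qden_even_step (k : ℕ) :
    qden x (2 * k + 2) ≤ 3 * cfa (2 * k + 2) x * qden x (2 * k) := by
  rw [qden_rec]
  have hq21 := qden_odd_le hxI h0 h1 hodd k
  have hA : 1 ≤ cfa (2 * k + 1 + 1) x := cfa_pos hxI h0 h1 (2 * k + 1)
  have hA' : 1 ≤ cfa (2 * k + 2) x := hA
  have hq0 := qden_one_le hxI h0 h1 (2 * k)
  have hq1 := qden_one_le hxI h0 h1 (2 * k + 1)
  nlinarith

omit hodd

lemma err_A (k : ℕ) :
    |x - (pnum x (2 * k + 1) : ℝ) / (qden x (2 * k + 1) : ℝ)| ≤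
      1 / ((cfa (2 * k + 2) x : ℝ) * (qden x (2 * k) : ℝ) ^ 2) := by
  refine le_trans (err_bound hxI h0 h1 (2 * k)) ?_
  have hA : 1 ≤ cfa (2 * k + 2) x := cfa_pos hxI h0 h1 (2 * k + 1)
  have hq0 := qden_one_le hxI h0 h1 (2 * k)
  have hq1 := qden_le_succ hxI h0 h1 (2 * k)
  have hq1' := qden_one_le hxI h0 h1 (2 * k + 1)
  have hrec := qden_rec x (2 * k)
  have hs1 : cfa (2 * k + 2) x * qden x (2 * k + 1) ≤ qden x (2 * k + 2) := by
    rw [hrec]; linarith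
  have key : cfa (2 * k + 2) x * qden x (2 * k) ^ 2 ≤
      qden x (2 * k + 1) * qden x (2 * k + 2) := by
    have hsq : qden x (2 * k) ^ 2 ≤ qden x (2 * k + 1) ^ 2 := by nlinarith
    calc cfa (2 * k + 2) x * qden x (2 * k) ^ 2
        ≤ cfa (2 * k + 2) x * qden x (2 * k + 1) ^ 2 := by nlinarith
      _ = (cfa (2 * k + 2) x * qden x (2 * k + 1)) * qden x (2 * k + 1) := by ring
      _ ≤ qden x (2 * k + 2) * qden x (2 * k + 1) :=
          mul_le_mul_of_nonneg_right hs1 (by linarith)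
      _ = qden x (2 * k + 1) * qden x (2 * k + 2) := by ring
  have hpos : (0 : ℝ) < (cfa (2 * k + 2) x : ℝ) * (qden x (2 * k) : ℝ) ^ 2 := by
    have h1'' : (1:ℝ) ≤ (cfa (2 * k + 2) x : ℝ) := by exact_mod_cast hA
    have h2'' : (1:ℝ) ≤ (qden x (2 * k) : ℝ) := by exact_mod_cast hq0
    nlinarith
  apply one_div_le_one_div_of_le hpos
  exact_mod_cast key

end derived

lemma rpow_helper {C z : ℝ} (hz : 0 < z) (hC : (3 : ℝ) ^ (1 / z) ≤ C) : (3 : ℝ) ≤ C ^ z := by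
  calc (3 : ℝ) = ((3 : ℝ) ^ (1 / z)) ^ z := by
        rw [← Real.rpow_mul (by norm_num : (0:ℝ) ≤ 3), one_div_mul_cancel hz.ne', Real.rpow_one]
      _ ≤ C ^ z := Real.rpow_le_rpow (Real.rpow_nonneg (by norm_num) _) hC hz.le

lemma shift_exp {Q A s : ℝ} (hQ : 1 ≤ Q) (h : A * Q ^ 2 < Q ^ s) : A * Q ≤ Q ^ (s - 1) := by
  have hQ0 : (0 : ℝ) < Q := lt_of_lt_of_le zero_lt_one hQ
  have hAQ : A * Q = (A * Q ^ 2) / Q := by field_simp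
  rw [hAQ, Real.rpow_sub hQ0, Real.rpow_one]
  gcongr



set_option maxHeartbeats 1600000 in
/-- Proposition 6.2: for `1 < d < b`, `c > 1` and every positive integer `m`, each
`x ∈ E(b,c)` satisfies (i) there is `n` with `q_{2n}(x) ≥ m`, `q_{2n}(x) ≥ c^{d^{2n}/3}`
and `|x − p_{2n+1}(x)/q_{2n+1}(x)| ≤ q_{2n}(x)^{−(1+d²)}`, or (ii) there is `n` with
`q_{2n}(x) ≥ m` and `|x − p_{2n+1}(x)/q_{2n+1}(x)| ≤ q_{2n}(x)^{−2(1+d²)}`. -/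
theorem cover_of_Ebc (b c d : ℝ) (hb : 1 < b) (hc : 1 < c) (hd1 : 1 < d) (hdb : d < b)
    (m : ℕ) (hm : 0 < m) (x : ℝ)
    (hx : x ∈ Ieven ∧ ∃ᶠ n in atTop, c ^ (b ^ (2 * n)) ≤ (cfa (2 * n) x : ℝ)) :
    (∃ n : ℕ, (m : ℤ) ≤ qden x (2 * n) ∧
        c ^ ((d : ℝ) ^ (2 * n) / 3) ≤ (qden x (2 * n) : ℝ) ∧
        |x - (pnum x (2 * n + 1) : ℝ) / (qden x (2 * n + 1) : ℝ)| ≤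
          (qden x (2 * n) : ℝ) ^ (-(1 + d ^ 2))) ∨
    (∃ n : ℕ, (m : ℤ) ≤ qden x (2 * n) ∧
        |x - (pnum x (2 * n + 1) : ℝ) / (qden x (2 * n + 1) : ℝ)| ≤
          (qden x (2 * n) : ℝ) ^ (-(2 * (1 + d ^ 2)))) := by
  obtain ⟨⟨hxIco, hxirr, hodd⟩, hfreq⟩ := hx
  have hx0 : 0 < x := lt_of_le_of_ne hxIco.1 (Ne.symm hxirr.ne_zero)
  have hx1 : x < 1 := hxIco.2
  by_contra hcon
  push_neg at hcon
  obtain ⟨H1, H2⟩ := hcon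
  -- constants
  set e : ℝ := (d + b) / 2 with he_def
  have hde : d < e := by rw [he_def]; linarith
  have heb : e < b := by rw [he_def]; linarith
  have he1 : (1:ℝ) < e := lt_trans hd1 hde
  have he0 : (0:ℝ) < e := by linarith
  have hd0 : (0:ℝ) < d := by linarith
  have hc0 : (0:ℝ) < c := by linarith
  have hed2 : (0:ℝ) < e^2 - d^2 := by nlinarith
  have hed3 : (0:ℝ) < (3*e^2 - 2*d^2 - 1)/3 := by nlinarith
  set C : ℝ := max (max ((qden x (2*m) : ℝ)) c)
    (max ((3:ℝ) ^ (1/(e^2 - d^2))) ((3:ℝ) ^ (1/((3*e^2 - 2*d^2 - 1)/3)))) with hC_def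
  have hCq : (qden x (2*m) : ℝ) ≤ C := le_trans (le_max_left _ _) (le_max_left _ _)
  have hCc : c ≤ C := le_trans (le_max_right _ _) (le_max_left _ _)
  have hC1 : (1:ℝ) < C := lt_of_lt_of_le hc hCc
  have hC0 : (0:ℝ) < C := lt_trans zero_lt_one hC1
  have h3a : (3:ℝ) ≤ C ^ (e^2 - d^2) :=
    rpow_helper hed2 (le_trans (le_max_left _ _) (le_max_right _ _))
  have h3b : (3:ℝ) ≤ C ^ ((3*e^2 - 2*d^2 - 1)/3) :=
    rpow_helper hed3 (le_trans (le_max_right _ _) (le_max_right _ _))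
  have hmq : ∀ k, m ≤ k → (m : ℤ) ≤ qden x (2 * k) := by
    intro k hk
    have h' := qden_ge hxirr hx0 hx1 k
    have h'' : (m:ℤ) ≤ (k:ℤ) + 1 := by push_cast; omega
    omega
  -- the inductive growth bound
  have key : ∀ k, m ≤ k → (qden x (2 * k) : ℝ) ≤ C ^ ((e ^ (2 * k) : ℝ)) := by
    intro k hk
    induction k, hk using Nat.le_induction with
    | base =>
      have h1e : (1:ℝ) ≤ e ^ (2*m) := one_le_pow₀ he1.le
      calc ((qden x (2*m):ℤ):ℝ) ≤ C := hCq
        _ = C ^ (1:ℝ) := (Real.rpow_one C).symm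
        _ ≤ C ^ ((e ^ (2*m) : ℝ)) := Real.rpow_le_rpow_of_exponent_le hC1.le h1e
    | succ k hk ih =>
      have hQ1 : (1:ℝ) ≤ (qden x (2*k) : ℝ) := by exact_mod_cast qden_one_le hxirr hx0 hx1 (2*k)
      have hQ0 : (0:ℝ) < (qden x (2*k) : ℝ) := lt_of_lt_of_le zero_lt_one hQ1
      have herr := err_A hxirr hx0 hx1 k
      have hm' := hmq k hk
      have hApos : (1:ℝ) ≤ (cfa (2*k+2) x : ℝ) := by
        exact_mod_cast cfa_pos hxirr hx0 hx1 (2*k+1)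
      have hq3 : (qden x (2*k+2) : ℝ) ≤ 3 * (cfa (2*k+2) x : ℝ) * (qden x (2*k) : ℝ) := by
        exact_mod_cast qden_even_step hxirr hx0 hx1 hodd k
      have hgoalidx : (2*(k+1) : ℕ) = 2*k+2 := by ring
      rw [hgoalidx]
      have hpa : e^(2*k+2) = e^(2*k) * e^2 := by rw [pow_add]
      have h1ek : (1:ℝ) ≤ e^(2*k) := one_le_pow₀ he1.le
      by_cases hcase : c ^ (d ^ (2 * k) / 3) ≤ ((qden x (2 * k) : ℤ) : ℝ)
      · -- case (i) fails: a_{2k+2} small relative to q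
        have hlt := H1 k hm' hcase
        have h2 : ((qden x (2*k) : ℤ):ℝ) ^ (-(1 + d^2)) <
            1/((cfa (2*k+2) x : ℝ) * ((qden x (2*k):ℤ):ℝ)^2) := lt_of_lt_of_le hlt herr
        rw [Real.rpow_neg hQ0.le, ← one_div] at h2
        have hstep : (cfa (2*k+2) x : ℝ) * ((qden x (2*k):ℤ):ℝ)^2 <
            ((qden x (2*k):ℤ):ℝ) ^ ((1 + d^2 : ℝ)) :=
          lt_of_one_div_lt_one_div (Real.rpow_pos_of_pos hQ0 _) h2
        have hAQ := shift_exp hQ1 hstep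
        have hq4 : (qden x (2*k+2) : ℝ) ≤ 3 * ((qden x (2*k):ℤ):ℝ) ^ ((1 + d^2 : ℝ) - 1) := by
          nlinarith
        have h5 : ((qden x (2*k):ℤ):ℝ) ^ ((1 + d^2 : ℝ) - 1) ≤
            (C ^ ((e^(2*k) : ℝ))) ^ ((1 + d^2 : ℝ) - 1) :=
          Real.rpow_le_rpow hQ0.le ih (by nlinarith)
        have h6 : (C ^ ((e^(2*k) : ℝ))) ^ ((1 + d^2 : ℝ) - 1)
            = C ^ ((e^(2*k) : ℝ) * ((1 + d^2 : ℝ) - 1)) := (Real.rpow_mul hC0.le _ _).symm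
        calc (qden x (2*k+2) : ℝ) ≤ 3 * ((qden x (2*k):ℤ):ℝ) ^ ((1 + d^2 : ℝ) - 1) := hq4
          _ ≤ C ^ (e^2 - d^2) * C ^ ((e^(2*k) : ℝ) * ((1 + d^2 : ℝ) - 1)) := by
              rw [← h6]
              exact mul_le_mul h3a h5 (Real.rpow_nonneg hQ0.le _) (Real.rpow_nonneg hC0.le _)
          _ = C ^ ((e^2 - d^2) + (e^(2*k) : ℝ) * ((1 + d^2 : ℝ) - 1)) :=
              (Real.rpow_add hC0 _ _).symm
          _ ≤ C ^ ((e ^ (2*k+2) : ℝ)) := by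
              apply Real.rpow_le_rpow_of_exponent_le hC1.le
              nlinarith [mul_le_mul_of_nonneg_right h1ek hed2.le]
      · -- case (ii) fails
        have hQlt : ((qden x (2*k):ℤ):ℝ) < c ^ (d ^ (2*k) / 3) := not_le.1 hcase
        have hlt := H2 k hm'
        have h2 : ((qden x (2*k) : ℤ):ℝ) ^ (-(2 * (1 + d^2))) <
            1/((cfa (2*k+2) x : ℝ) * ((qden x (2*k):ℤ):ℝ)^2) := lt_of_lt_of_le hlt herr
        rw [Real.rpow_neg hQ0.le, ← one_div] at h2
        have hstep : (cfa (2*k+2) x : ℝ) * ((qden x (2*k):ℤ):ℝ)^2 <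
            ((qden x (2*k):ℤ):ℝ) ^ ((2 * (1 + d^2) : ℝ)) :=
          lt_of_one_div_lt_one_div (Real.rpow_pos_of_pos hQ0 _) h2
        have hAQ := shift_exp hQ1 hstep
        have hq4 : (qden x (2*k+2) : ℝ) ≤ 3 * ((qden x (2*k):ℤ):ℝ) ^ ((2 * (1 + d^2) : ℝ) - 1) := by
          nlinarith
        have hexp_nonneg : (0:ℝ) ≤ (2 * (1 + d^2) : ℝ) - 1 := by nlinarith
        have h5 : ((qden x (2*k):ℤ):ℝ) ^ ((2 * (1 + d^2) : ℝ) - 1) ≤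
            (c ^ (d ^ (2*k) / 3)) ^ ((2 * (1 + d^2) : ℝ) - 1) :=
          Real.rpow_le_rpow hQ0.le hQlt.le hexp_nonneg
        have h6 : (c ^ (d ^ (2*k) / 3)) ^ ((2 * (1 + d^2) : ℝ) - 1)
            = c ^ (d ^ (2*k) / 3 * ((2 * (1 + d^2) : ℝ) - 1)) := (Real.rpow_mul hc0.le _ _).symm
        have hdpow : d ^ (2*k) ≤ e ^ (2*k) := pow_le_pow_left₀ hd0.le hde.le _
        have ht1t2 : d ^ (2*k) / 3 * ((2 * (1 + d^2) : ℝ) - 1) ≤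
            (e ^ (2*k) : ℝ) / 3 * ((2 * (1 + d^2) : ℝ) - 1) := by
          apply mul_le_mul_of_nonneg_right _ hexp_nonneg
          linarith
        have h7 : c ^ (d ^ (2*k) / 3 * ((2 * (1 + d^2) : ℝ) - 1)) ≤
            C ^ ((e ^ (2*k) : ℝ) / 3 * ((2 * (1 + d^2) : ℝ) - 1)) := by
          calc c ^ (d ^ (2*k) / 3 * ((2 * (1 + d^2) : ℝ) - 1)) ≤
              C ^ (d ^ (2*k) / 3 * ((2 * (1 + d^2) : ℝ) - 1)) := by
                apply Real.rpow_le_rpow hc0.le hCc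
                positivity
            _ ≤ C ^ ((e ^ (2*k) : ℝ) / 3 * ((2 * (1 + d^2) : ℝ) - 1)) :=
                Real.rpow_le_rpow_of_exponent_le hC1.le ht1t2
        calc (qden x (2*k+2) : ℝ) ≤ 3 * ((qden x (2*k):ℤ):ℝ) ^ ((2 * (1 + d^2) : ℝ) - 1) := hq4
          _ ≤ 3 * C ^ ((e ^ (2*k) : ℝ) / 3 * ((2 * (1 + d^2) : ℝ) - 1)) := by
              have := le_trans (le_trans h5 (le_of_eq h6)) h7
              nlinarith [this, Real.rpow_nonneg hQ0.le ((2 * (1 + d^2) : ℝ) - 1)]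
          _ ≤ C ^ ((3*e^2 - 2*d^2 - 1)/3) * C ^ ((e ^ (2*k) : ℝ) / 3 * ((2 * (1 + d^2) : ℝ) - 1)) :=
              mul_le_mul_of_nonneg_right h3b (Real.rpow_nonneg hC0.le _)
          _ = C ^ ((3*e^2 - 2*d^2 - 1)/3 + (e ^ (2*k) : ℝ) / 3 * ((2 * (1 + d^2) : ℝ) - 1)) :=
              (Real.rpow_add hC0 _ _).symm
          _ ≤ C ^ ((e ^ (2*k+2) : ℝ)) := by
              apply Real.rpow_le_rpow_of_exponent_le hC1.le
              nlinarith [mul_le_mul_of_nonneg_right h1ek (le_of_lt hed3)]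
  -- final contradiction via growth of b^{2n}
  have hbe : (1:ℝ) < (b/e)^2 := by
    have hh : (1:ℝ) < b/e := (one_lt_div he0).2 heb
    nlinarith
  have hlogc : 0 < Real.log c := Real.log_pos hc
  have hev := (tendsto_pow_atTop_atTop_of_one_lt hbe).eventually_ge_atTop
    (Real.log C / Real.log c + 1)
  obtain ⟨N, hN⟩ := Filter.eventually_atTop.1 hev
  obtain ⟨n, hPn, hge⟩ := (hfreq.and_eventually (Filter.eventually_ge_atTop (max (m+1) N))).exists
  have hmn : m ≤ n := le_trans (Nat.le_succ m) (le_trans (le_max_left _ _) hge)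
  have hNn : N ≤ n := le_trans (le_max_right _ _) hge
  have hn1 : 1 ≤ n := le_trans hm (le_trans (Nat.le_succ m) (le_trans (le_max_left _ _) hge))
  have hlog : Real.log C * (e^(2*n)) < Real.log c * (b^(2*n)) := by
    have h' := hN n hNn
    have h'' : Real.log C / Real.log c < ((b/e)^2)^n := lt_of_lt_of_le (lt_add_one _) h'
    have hCc' : Real.log C < ((b/e)^2)^n * Real.log c := (div_lt_iff₀ hlogc).1 h''
    have hepos : (0:ℝ) < e^(2*n) := pow_pos he0 _
    have hbe_id : ((b/e)^2)^n * e^(2*n) = b^(2*n) := by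
      rw [← pow_mul, div_pow]
      field_simp
    calc Real.log C * (e^(2*n)) < (((b/e)^2)^n * Real.log c) * e^(2*n) :=
          mul_lt_mul_of_pos_right hCc' hepos
      _ = Real.log c * (((b/e)^2)^n * e^(2*n)) := by ring
      _ = Real.log c * (b^(2*n)) := by rw [hbe_id]
  have hfinal : C ^ ((e^(2*n) : ℝ)) < c ^ ((b^(2*n) : ℝ)) := by
    rw [Real.rpow_def_of_pos hC0, Real.rpow_def_of_pos hc0]
    exact Real.exp_lt_exp.2 hlog
  obtain ⟨j, rfl⟩ : ∃ j, n = j + 1 := ⟨n - 1, by omega⟩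
  have hcq : cfa (2 * (j+1)) x ≤ qden x (2 * (j+1)) := cfa_le_qden hxirr hx0 hx1 j
  have hc2 : ((cfa (2*(j+1)) x : ℤ):ℝ) ≤ ((qden x (2*(j+1)) : ℤ):ℝ) := by exact_mod_cast hcq
  linarith [key (j+1) hmn, hfinal, hPn, hc2]
end
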